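/- arXiv:2504.21812 — 5 statements merged into one kernel-verified Lean document; each statement's English description precedes it below -/
import Mathlib

section
/- The variance of the truncated harmonic mean estimator based on M i.i.d. posterior draws with truncation set A satisfies Var[Ẑ^{-1}] = (Z^{-2}/M) · ( ∫_A (1/V(A)^2) / p(θ) dθ − 1 ), where p is the posterior density, provided A is measurable with 0 < V(A) < ∞ and A is contained in the posterior support. -/
open MeasureTheory ProbabilityTheory
open scoped ENNReal

/-- Variance of the truncated harmonic mean estimator based on `M` i.i.d. posterior
draws with truncation set `A`:
`Var[Ẑ⁻¹] = (Z⁻²/M) · (∫_A (1/V(A)²)/p(θ) dθ − 1)`,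
stated on the extended nonnegative reals as
`Var[Ẑ⁻¹] + Z⁻²/M = (Z⁻²/M) · ∫_A (1/V(A)²)/p(θ) dθ`,
where `p(θ) = π(θ)L(θ)/Z` is the posterior density, provided `A` is measurable with
`0 < V(A) < ∞` and `A` is contained in the posterior support. -/
theorem thames_variance_formula
    {R : ℕ} (prior L : (Fin R → ℝ) → ℝ)
    (hprior : Measurable prior) (hL : Measurable L)
    (hpriornn : ∀ θ, 0 ≤ prior θ) (hLnn : ∀ θ, 0 ≤ L θ)
    (Z : ℝ) (hZ : Z = ∫ θ, prior θ * L θ) (hZpos : 0 < Z)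
    (A : Set (Fin R → ℝ)) (hA : MeasurableSet A)
    (hApos : 0 < volume A) (hAfin : volume A < ⊤)
    (hAsupp : A ⊆ {θ | 0 < prior θ * L θ})
    {Ω : Type} [MeasureSpace Ω] [IsProbabilityMeasure (ℙ : Measure Ω)]
    (M : ℕ) (hM : 0 < M)
    (X : Fin M → Ω → (Fin R → ℝ))
    (hXmeas : ∀ t, Measurable (X t))
    (hXdist : ∀ t, Measure.map (X t) ℙ =
      volume.withDensity (fun θ => ENNReal.ofReal (prior θ * L θ / Z)))
    (hXindep : iIndepFun X ℙ) :
    evariance (fun ω => (1 / (M : ℝ)) * ∑ t : Fin M,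
        A.indicator (fun _ => (1 : ℝ)) (X t ω) /
          ((volume A).toReal * (prior (X t ω) * L (X t ω)))) ℙ
      + ENNReal.ofReal (Z⁻¹ ^ 2 / M)
    = ENNReal.ofReal (Z⁻¹ ^ 2 / M) *
        ∫⁻ θ in A, ENNReal.ofReal
          ((1 / (volume A).toReal ^ 2) / (prior θ * L θ / Z)) := by
  classical
  set V : ℝ := (volume A).toReal with hVdef
  have hVpos : 0 < V := ENNReal.toReal_pos hApos.ne' hAfin.ne
  set f : (Fin R → ℝ) → ℝ := fun θ =>
    A.indicator (fun _ => (1 : ℝ)) θ / (V * (prior θ * L θ)) with hfdef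
  have hfm : Measurable f :=
    (measurable_const.indicator hA).div (measurable_const.mul (hprior.mul hL))
  have hf0 : ∀ θ, 0 ≤ f θ := fun θ => div_nonneg
    (Set.indicator_nonneg (fun _ _ => zero_le_one) θ)
    (mul_nonneg hVpos.le (mul_nonneg (hpriornn θ) (hLnn θ)))
  have hGm : ∀ t, Measurable (fun ω => ENNReal.ofReal (f (X t ω))) :=
    fun t => ENNReal.measurable_ofReal.comp (hfm.comp (hXmeas t))
  have hdm : Measurable (fun θ => ENNReal.ofReal (prior θ * L θ / Z)) :=
    ENNReal.measurable_ofReal.comp ((hprior.mul hL).div_const Z)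
  set I : ℝ≥0∞ := ∫⁻ θ in A, ENNReal.ofReal ((1 / V ^ 2) / (prior θ * L θ / Z)) with hIdef
  set q : ℝ≥0∞ := ENNReal.ofReal Z⁻¹ with hqdef
  set r : ℝ≥0∞ := ENNReal.ofReal (Z⁻¹ ^ 2) with hrdef
  have hrne : r ≠ ⊤ := ENNReal.ofReal_ne_top
  -- first moment on θ-space
  have hint1 : ∫⁻ θ, ENNReal.ofReal (prior θ * L θ / Z) * ENNReal.ofReal (f θ) = q := by
    have hpt : (fun θ => ENNReal.ofReal (prior θ * L θ / Z) * ENNReal.ofReal (f θ))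
        = A.indicator (fun _ => ENNReal.ofReal ((Z * V)⁻¹)) := by
      funext θ
      by_cases hθ : θ ∈ A
      · have hpl : 0 < prior θ * L θ := hAsupp hθ
        rw [Set.indicator_of_mem hθ, hfdef]
        simp only [Set.indicator_of_mem hθ]
        rw [← ENNReal.ofReal_mul (by positivity)]
        congr 1
        have hp0 : prior θ ≠ 0 := fun h => by simp [h] at hpl
        have hL0 : L θ ≠ 0 := fun h => by simp [h] at hpl
        field_simp
      · rw [Set.indicator_of_notMem hθ, hfdef]
        simp [Set.indicator_of_notMem hθ]
    rw [hpt, lintegral_indicator_const hA, ← ENNReal.ofReal_toReal hAfin.ne, ← hVdef,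
      ← ENNReal.ofReal_mul (by positivity), hqdef]
    congr 1
    field_simp
  -- second moment on θ-space
  have hint2 : ∫⁻ θ, ENNReal.ofReal (prior θ * L θ / Z) * ENNReal.ofReal (f θ) ^ 2 = r * I := by
    have hpt : (fun θ => ENNReal.ofReal (prior θ * L θ / Z) * ENNReal.ofReal (f θ) ^ 2)
        = A.indicator (fun θ => ENNReal.ofReal (Z⁻¹ ^ 2)
            * ENNReal.ofReal ((1 / V ^ 2) / (prior θ * L θ / Z))) := by
      funext θ
      by_cases hθ : θ ∈ A
      · have hpl : 0 < prior θ * L θ := hAsupp hθ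
        rw [Set.indicator_of_mem hθ, hfdef]
        simp only [Set.indicator_of_mem hθ]
        have h1 : (0:ℝ) ≤ 1 / (V * (prior θ * L θ)) :=
          div_nonneg zero_le_one (mul_nonneg hVpos.le hpl.le)
        rw [← ENNReal.ofReal_pow h1,
          ← ENNReal.ofReal_mul (div_nonneg (mul_nonneg (hpriornn θ) (hLnn θ)) hZpos.le),
          ← ENNReal.ofReal_mul (sq_nonneg _)]
        congr 1
        field_simp
      · rw [Set.indicator_of_notMem hθ, hfdef]
        simp [Set.indicator_of_notMem hθ]
    rw [hpt, lintegral_indicator hA, hrdef,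
      lintegral_const_mul' _ _ ENNReal.ofReal_ne_top, hIdef]
  -- transfer to Ω
  have hXg : ∀ t, ∫⁻ ω, ENNReal.ofReal (f (X t ω)) ∂ℙ = q := by
    intro t
    calc ∫⁻ ω, ENNReal.ofReal (f (X t ω)) ∂ℙ
        = ∫⁻ θ, ENNReal.ofReal (f θ) ∂(Measure.map (X t) ℙ) :=
          (lintegral_map (ENNReal.measurable_ofReal.comp hfm) (hXmeas t)).symm
      _ = ∫⁻ θ, ENNReal.ofReal (f θ)
            ∂(volume.withDensity fun θ => ENNReal.ofReal (prior θ * L θ / Z)) := by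
          rw [hXdist t]
      _ = ∫⁻ θ, ((fun θ => ENNReal.ofReal (prior θ * L θ / Z))
            * fun θ => ENNReal.ofReal (f θ)) θ :=
          lintegral_withDensity_eq_lintegral_mul volume hdm
            (ENNReal.measurable_ofReal.comp hfm)
      _ = q := by simp only [Pi.mul_apply]; exact hint1
  have hXg2 : ∀ t, ∫⁻ ω, ENNReal.ofReal (f (X t ω)) ^ 2 ∂ℙ = r * I := by
    intro t
    calc ∫⁻ ω, ENNReal.ofReal (f (X t ω)) ^ 2 ∂ℙ
        = ∫⁻ θ, ENNReal.ofReal (f θ) ^ 2 ∂(Measure.map (X t) ℙ) :=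
          (lintegral_map ((ENNReal.measurable_ofReal.comp hfm).pow_const 2) (hXmeas t)).symm
      _ = ∫⁻ θ, ENNReal.ofReal (f θ) ^ 2
            ∂(volume.withDensity fun θ => ENNReal.ofReal (prior θ * L θ / Z)) := by
          rw [hXdist t]
      _ = ∫⁻ θ, ((fun θ => ENNReal.ofReal (prior θ * L θ / Z))
            * fun θ => ENNReal.ofReal (f θ) ^ 2) θ :=
          lintegral_withDensity_eq_lintegral_mul volume hdm
            ((ENNReal.measurable_ofReal.comp hfm).pow_const 2)
      _ = r * I := by simp only [Pi.mul_apply]; exact hint2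
  -- cross terms
  have hcross : ∀ s t : Fin M, s ≠ t →
      ∫⁻ ω, ENNReal.ofReal (f (X s ω)) * ENNReal.ofReal (f (X t ω)) ∂ℙ = q * q := by
    intro s t hst
    have hind : IndepFun (fun ω => ENNReal.ofReal (f (X s ω)))
        (fun ω => ENNReal.ofReal (f (X t ω))) ℙ :=
      (hXindep.indepFun hst).comp (ENNReal.measurable_ofReal.comp hfm)
        (ENNReal.measurable_ofReal.comp hfm)
    have h := lintegral_mul_eq_lintegral_mul_lintegral_of_indepFun
      (hGm s) (hGm t) hind
    simp only [Pi.mul_apply] at h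
    rw [h, hXg s, hXg t]
  -- integrability and mean
  have hInt : ∀ t, Integrable (fun ω => f (X t ω)) ℙ := by
    intro t
    refine ⟨(hfm.comp (hXmeas t)).aestronglyMeasurable, ?_⟩
    rw [hasFiniteIntegral_iff_ofReal (Filter.Eventually.of_forall fun ω => hf0 _)]
    rw [hXg t]
    exact ENNReal.ofReal_lt_top
  have hMean : ∀ t, ∫ ω, f (X t ω) ∂ℙ = Z⁻¹ := by
    intro t
    rw [integral_eq_lintegral_of_nonneg_ae (Filter.Eventually.of_forall fun ω => hf0 _)
      (hfm.comp (hXmeas t)).aestronglyMeasurable, hXg t, hqdef,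
      ENNReal.toReal_ofReal (inv_nonneg.2 hZpos.le)]
  have hEW : ∫ ω, (1 / (M : ℝ)) * ∑ t : Fin M, f (X t ω) ∂ℙ = Z⁻¹ := by
    rw [integral_const_mul, integral_finset_sum _ (fun t _ => hInt t)]
    simp only [hMean, Finset.sum_const, Finset.card_univ, Fintype.card_fin, nsmul_eq_mul]
    have hMne : (M : ℝ) ≠ 0 := Nat.cast_ne_zero.2 hM.ne'
    field_simp
  -- measurability of W
  have hWm : Measurable (fun ω => (1 / (M : ℝ)) * ∑ t : Fin M, f (X t ω)) :=
    measurable_const.mul (Finset.measurable_sum _ fun t _ => hfm.comp (hXmeas t))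
  -- second moment of W
  have hW2 : ∫⁻ ω, ‖(1 / (M : ℝ)) * ∑ t : Fin M, f (X t ω)‖ₑ ^ 2 ∂ℙ
      = ENNReal.ofReal (1 / (M : ℝ)) ^ 2 * ∑ s : Fin M, ∑ t : Fin M,
          ∫⁻ ω, ENNReal.ofReal (f (X s ω)) * ENNReal.ofReal (f (X t ω)) ∂ℙ := by
    have hpt : ∀ ω, ‖(1 / (M : ℝ)) * ∑ t : Fin M, f (X t ω)‖ₑ ^ 2
        = ENNReal.ofReal (1 / (M : ℝ)) ^ 2 * ∑ s : Fin M, ∑ t : Fin M,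
            ENNReal.ofReal (f (X s ω)) * ENNReal.ofReal (f (X t ω)) := by
      intro ω
      rw [Real.enorm_eq_ofReal (mul_nonneg (by positivity)
          (Finset.sum_nonneg fun t _ => hf0 _)),
        ENNReal.ofReal_mul (by positivity),
        ENNReal.ofReal_sum_of_nonneg (fun t _ => hf0 _), mul_pow,
        pow_two (∑ t : Fin M, ENNReal.ofReal (f (X t ω))), Finset.sum_mul_sum]
    simp_rw [hpt]
    rw [lintegral_const_mul (f := fun ω => ∑ s : Fin M, ∑ t : Fin M, ENNReal.ofReal (f (X s ω)) * ENNReal.ofReal (f (X t ω))) _ (Finset.measurable_sum _ fun s _ =>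
      Finset.measurable_sum _ fun t _ => ((hGm s).mul (hGm t) : Measurable fun ω => ENNReal.ofReal (f (X s ω)) * ENNReal.ofReal (f (X t ω))))]
    congr 1
    rw [lintegral_finset_sum (f := fun s ω => ∑ t : Fin M, ENNReal.ofReal (f (X s ω)) * ENNReal.ofReal (f (X t ω))) _ (fun s _ =>
      Finset.measurable_sum _ fun t _ => ((hGm s).mul (hGm t) : Measurable fun ω => ENNReal.ofReal (f (X s ω)) * ENNReal.ofReal (f (X t ω))))]
    exact Finset.sum_congr rfl fun s _ =>
      lintegral_finset_sum _ fun t _ => ((hGm s).mul (hGm t) : Measurable fun ω => ENNReal.ofReal (f (X s ω)) * ENNReal.ofReal (f (X t ω)))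
  -- sum evaluation
  have hsum : ∑ s : Fin M, ∑ t : Fin M,
      (∫⁻ ω, ENNReal.ofReal (f (X s ω)) * ENNReal.ofReal (f (X t ω)) ∂ℙ)
      = M • (r * I) + (M * (M - 1)) • (q * q) := by
    have hcell : ∀ s t : Fin M,
        (∫⁻ ω, ENNReal.ofReal (f (X s ω)) * ENNReal.ofReal (f (X t ω)) ∂ℙ)
        = if s = t then r * I else q * q := by
      intro s t
      by_cases hst : s = t
      · subst hst
        simp only [if_pos rfl, ← sq]
        exact hXg2 s
      · rw [if_neg hst]
        exact hcross s t hst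
    simp_rw [hcell]
    have hinner : ∀ s : Fin M, (∑ t : Fin M, if s = t then r * I else q * q)
        = r * I + (M - 1) • (q * q) := by
      intro s
      rw [← Finset.add_sum_erase _ _ (Finset.mem_univ s), if_pos rfl]
      congr 1
      rw [Finset.sum_congr rfl (fun t ht => if_neg (Finset.ne_of_mem_erase ht).symm),
        Finset.sum_const, Finset.card_erase_of_mem (Finset.mem_univ s),
        Finset.card_univ, Fintype.card_fin]
    simp_rw [hinner]
    rw [Finset.sum_const, Finset.card_univ, Fintype.card_fin, smul_add, smul_smul]
  -- Cauchy–Schwarz: q * q ≤ r * I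
  have hCS : q * q ≤ r * I := by
    set t0 : Fin M := ⟨0, hM⟩
    have hconj : Real.HolderConjugate 2 2 := Real.HolderConjugate.two_two
    have h := ENNReal.lintegral_mul_le_Lp_mul_Lq ℙ hconj
      (hGm t0).aemeasurable (aemeasurable_const (b := (1 : ℝ≥0∞)))
    simp only [Pi.mul_apply, mul_one, ENNReal.one_rpow, lintegral_const, measure_univ,
      one_mul] at h
    have h2 : ∀ x : ℝ≥0∞, x ^ (2 : ℝ) = x ^ (2 : ℕ) := fun x => by
      rw [← ENNReal.rpow_natCast]; norm_num
    simp_rw [h2] at h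
    rw [hXg t0, hXg2 t0] at h
    calc q * q = (q : ℝ≥0∞) ^ (2 : ℕ) := by rw [sq]
      _ ≤ ((r * I) ^ (1 / 2 : ℝ)) ^ (2 : ℕ) := pow_le_pow_left' h 2
      _ = r * I := by
          rw [← ENNReal.rpow_natCast (((r * I) ^ (1 / 2 : ℝ))) 2, ← ENNReal.rpow_mul]
          norm_num
  -- put it together
  rw [evariance_def' hWm.aestronglyMeasurable]
  have hEWrw : (ℙ[fun ω => (1 / (M : ℝ)) * ∑ t : Fin M,
      A.indicator (fun _ => (1 : ℝ)) (X t ω) /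
        (V * (prior (X t ω) * L (X t ω)))]) = Z⁻¹ := hEW
  rw [hEWrw]
  have hW2' : ∫⁻ ω, ‖(1 / (M : ℝ)) * ∑ t : Fin M,
        A.indicator (fun _ => (1 : ℝ)) (X t ω) /
          (V * (prior (X t ω) * L (X t ω)))‖ₑ ^ 2 ∂ℙ
      = ENNReal.ofReal (1 / (M : ℝ)) ^ 2 * (M • (r * I) + (M * (M - 1)) • (q * q)) := by
    rw [← hsum]; exact hW2
  rw [hW2']
  -- final ℝ≥0∞ arithmetic
  have hm0 : ((M : ℝ≥0∞)) ≠ 0 := Nat.cast_ne_zero.2 hM.ne'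
  have hmtop : ((M : ℝ≥0∞)) ≠ ⊤ := ENNReal.natCast_ne_top M
  have hc : ENNReal.ofReal (1 / (M : ℝ)) = ((M : ℝ≥0∞))⁻¹ := by
    rw [one_div, ENNReal.ofReal_inv_of_pos (by exact_mod_cast hM), ENNReal.ofReal_natCast]
  have hZM : ENNReal.ofReal (Z⁻¹ ^ 2 / M) = r * ((M : ℝ≥0∞))⁻¹ := by
    rw [div_eq_mul_inv, ENNReal.ofReal_mul (by positivity), hrdef,
      ENNReal.ofReal_inv_of_pos (by exact_mod_cast hM), ENNReal.ofReal_natCast]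
  have hqq : q * q = r := by
    rw [hqdef, hrdef, ← ENNReal.ofReal_mul (by positivity), sq]
  rw [hZM, hc, hqq]
  have hnsmul1 : M • (r * I) = (M : ℝ≥0∞) * (r * I) := by
    rw [nsmul_eq_mul]
  have hnsmul2 : (M * (M - 1)) • r = (M : ℝ≥0∞) * ((M : ℝ≥0∞) - 1) * r := by
    rw [nsmul_eq_mul, Nat.cast_mul, ENNReal.natCast_sub, Nat.cast_one]
  rw [hnsmul1, hnsmul2]
  -- abbreviations
  set m : ℝ≥0∞ := (M : ℝ≥0∞) with hmdef
  have hm1 : 1 ≤ m := Nat.one_le_cast.2 hM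
  have expand : m⁻¹ ^ 2 * (m * (r * I) + m * (m - 1) * r)
      = r * m⁻¹ * I + (r - r * m⁻¹) := by
    rw [mul_add]
    congr 1
    · rw [sq]
      calc m⁻¹ * m⁻¹ * (m * (r * I)) = (m⁻¹ * m) * (m⁻¹ * (r * I)) := by ring
        _ = m⁻¹ * (r * I) := by rw [ENNReal.inv_mul_cancel hm0 hmtop, one_mul]
        _ = r * m⁻¹ * I := by ring
    · calc m⁻¹ ^ 2 * (m * (m - 1) * r) = (m⁻¹ * m) * (m⁻¹ * ((m - 1) * r)) := by ring
        _ = m⁻¹ * ((m - 1) * r) := by rw [ENNReal.inv_mul_cancel hm0 hmtop, one_mul]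
        _ = (m - 1) * (r * m⁻¹) := by ring
        _ = m * (r * m⁻¹) - 1 * (r * m⁻¹) := by
            rw [ENNReal.sub_mul]
            intro _ _
            exact ENNReal.mul_ne_top hrne (ENNReal.inv_ne_top.mpr hm0)
        _ = r - r * m⁻¹ := by
            rw [one_mul]
            congr 1
            calc m * (r * m⁻¹) = (m * m⁻¹) * r := by ring
              _ = r := by rw [ENNReal.mul_inv_cancel hm0 hmtop, one_mul]
  rw [expand]
  -- now: (a + (r - b)) - r + b = a  with b := r * m⁻¹, a := r * m⁻¹ * I
  set b : ℝ≥0∞ := r * m⁻¹ with hbdef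
  set a : ℝ≥0∞ := r * m⁻¹ * I with hadef
  have hbr : b ≤ r := by
    calc b = r * m⁻¹ := rfl
      _ ≤ r * 1 := mul_le_mul_right (ENNReal.inv_le_one.2 hm1) r
      _ = r := mul_one r
  have hba : b ≤ a := by
    have : r ≤ r * I := by
      calc r = q * q := hqq.symm
        _ ≤ r * I := hCS
    calc b = r * m⁻¹ := rfl
      _ ≤ (r * I) * m⁻¹ := mul_le_mul_left this _
      _ = a := by rw [hadef]; ring
  obtain ⟨a', ha'⟩ : ∃ a', a = a' + b := ⟨a - b, (tsub_add_cancel_of_le hba).symm⟩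
  rw [ha', add_assoc, add_tsub_cancel_of_le hbr, ENNReal.add_sub_cancel_right hrne]
end

section
/- Optimality of HPD truncation (Theorem 1): assume π(θ)L(θ) is continuous on its support and non-constant in the sense that every level set {θ : π(θ)L(θ) = q}, q > 0, has Lebesgue measure zero. For α ∈ (0,1], let H_α = {θ : π(θ)L(θ) > q_α} where q_α is the constant for which the posterior probability of H_α equals α. If θ^(1),…,θ^(M) are i.i.d. draws from the posterior, then for every measurable set A of finite nonzero volume contained in the posterior support there exists α ∈ (0,1] such that the variance of the truncated harmonic mean estimator with truncation set H_α is less than or equal to the variance of the truncated harmonic mean estimator with truncation set A. -/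
open MeasureTheory ProbabilityTheory


private lemma aux_mean {R : ℕ} (f : (Fin R → ℝ) → ℝ) (hf : Measurable f) (Z : ℝ) (hZpos : 0 < Z)
    (B : Set (Fin R → ℝ)) (hB : MeasurableSet B) (hBsub : ∀ θ ∈ B, 0 < f θ)
    (hBfin : volume B < ⊤) (hv : 0 < (volume B).toReal) :
    ∫⁻ θ, ENNReal.ofReal (f θ / Z) *
        ENNReal.ofReal (B.indicator (fun _ => (1:ℝ)) θ / ((volume B).toReal * f θ)) ∂volume
      = ENNReal.ofReal (1 / Z) := by
  set v := (volume B).toReal with hvdef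
  have hptwise : (fun θ => ENNReal.ofReal (f θ / Z) *
      ENNReal.ofReal (B.indicator (fun _ => (1:ℝ)) θ / (v * f θ)))
      = B.indicator (fun _ => ENNReal.ofReal (1 / (v * Z))) := by
    funext θ
    by_cases hθ : θ ∈ B
    · have hfθ : 0 < f θ := hBsub θ hθ
      rw [Set.indicator_of_mem hθ, Set.indicator_of_mem hθ]
      rw [← ENNReal.ofReal_mul (by positivity)]
      congr 1
      field_simp
    · rw [Set.indicator_of_notMem hθ, Set.indicator_of_notMem hθ]
      simp
  rw [hptwise, lintegral_indicator hB, setLIntegral_const]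
  rw [show volume B = ENNReal.ofReal v from (ENNReal.ofReal_toReal hBfin.ne).symm]
  rw [← ENNReal.ofReal_mul (by positivity)]
  congr 1
  field_simp

private lemma aux_E2 {R : ℕ} (f : (Fin R → ℝ) → ℝ) (hf : Measurable f) (Z : ℝ) (hZpos : 0 < Z)
    (B : Set (Fin R → ℝ)) (hB : MeasurableSet B) (hBsub : ∀ θ ∈ B, 0 < f θ)
    (hv : 0 < (volume B).toReal) :
    ∫⁻ θ, ENNReal.ofReal (f θ / Z) *
        (ENNReal.ofReal (B.indicator (fun _ => (1:ℝ)) θ / ((volume B).toReal * f θ)))^2 ∂volume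
      = ENNReal.ofReal (1 / ((volume B).toReal^2 * Z)) * ∫⁻ θ in B, ENNReal.ofReal (1 / f θ) ∂volume := by
  set v := (volume B).toReal with hvdef
  have hptwise : (fun θ => ENNReal.ofReal (f θ / Z) *
      (ENNReal.ofReal (B.indicator (fun _ => (1:ℝ)) θ / (v * f θ)))^2)
      = B.indicator (fun θ => ENNReal.ofReal (1 / (v^2 * Z)) * ENNReal.ofReal (1 / f θ)) := by
    funext θ
    by_cases hθ : θ ∈ B
    · have hfθ : 0 < f θ := hBsub θ hθ
      rw [Set.indicator_of_mem hθ, Set.indicator_of_mem hθ]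
      rw [← ENNReal.ofReal_pow (by positivity), ← ENNReal.ofReal_mul (by positivity),
        ← ENNReal.ofReal_mul (by positivity)]
      congr 1
      field_simp
    · rw [Set.indicator_of_notMem hθ, Set.indicator_of_notMem hθ]
      simp
  rw [hptwise, lintegral_indicator hB, lintegral_const_mul]
  · exact (ENNReal.measurable_ofReal.comp (measurable_const.div hf)).comp measurable_id |>.mono le_rfl le_rfl

private lemma aux_var {R : ℕ} (f : (Fin R → ℝ) → ℝ) (hf : Measurable f) (Z : ℝ) (hZpos : 0 < Z)
    (B : Set (Fin R → ℝ)) (hB : MeasurableSet B) (hBsub : ∀ θ ∈ B, 0 < f θ)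
    (hBfin : volume B < ⊤) (hv : 0 < (volume B).toReal)
    {Ω : Type} [MeasureSpace Ω] [IsProbabilityMeasure (ℙ : Measure Ω)]
    (M : ℕ) (hM : 0 < M)
    (X : Fin M → Ω → (Fin R → ℝ)) (hXmeas : ∀ t, Measurable (X t))
    (hXdist : ∀ t, Measure.map (X t) ℙ = volume.withDensity (fun θ => ENNReal.ofReal (f θ / Z)))
    (hXindep : iIndepFun X ℙ) :
    evariance (fun ω => (1 / (M : ℝ)) * ∑ t : Fin M,
        B.indicator (fun _ => (1:ℝ)) (X t ω) / ((volume B).toReal * f (X t ω))) ℙ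
      + ENNReal.ofReal (2 * (1/Z)^2)
    = ENNReal.ofReal ((1/(M:ℝ))^2) *
        (∑ t : Fin M, ∑ s : Fin M, (if t = s then
          ENNReal.ofReal (1 / ((volume B).toReal^2 * Z)) * ∫⁻ θ in B, ENNReal.ofReal (1 / f θ) ∂volume
          else (ENNReal.ofReal (1/Z))^2))
      + ENNReal.ofReal ((1/Z)^2) := by
  have hMR : (0:ℝ) < (M:ℝ) := by exact_mod_cast hM
  set v := (volume B).toReal with hvdef
  set Y : (Fin R → ℝ) → ℝ := fun θ => B.indicator (fun _ => (1:ℝ)) θ / (v * f θ) with hYdef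
  have hYmeas : Measurable Y := (measurable_const.indicator hB).div (measurable_const.mul hf)
  have hYnn : ∀ θ, 0 ≤ Y θ := by
    intro θ
    by_cases hθ : θ ∈ B
    · have := hBsub θ hθ
      simp only [hYdef, Set.indicator_of_mem hθ]
      positivity
    · simp [hYdef, Set.indicator_of_notMem hθ]
  have hφ : Measurable (fun θ => ENNReal.ofReal (Y θ)) := ENNReal.measurable_ofReal.comp hYmeas
  have hdens : Measurable (fun θ => ENNReal.ofReal (f θ / Z)) :=
    ENNReal.measurable_ofReal.comp (hf.div_const Z)
  have hφX : ∀ t : Fin M, Measurable fun ω => ENNReal.ofReal (Y (X t ω)) :=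
    fun t => hφ.comp (hXmeas t)
  have hYl : ∀ t, ∫⁻ ω, ENNReal.ofReal (Y (X t ω)) ∂ℙ = ENNReal.ofReal (1/Z) := by
    intro t
    rw [← lintegral_map hφ (hXmeas t), hXdist t,
      lintegral_withDensity_eq_lintegral_mul _ hdens hφ]
    simpa using aux_mean f hf Z hZpos B hB hBsub hBfin hv
  have hE2l : ∀ t, ∫⁻ ω, (ENNReal.ofReal (Y (X t ω)))^2 ∂ℙ
      = ENNReal.ofReal (1 / (v^2 * Z)) * ∫⁻ θ in B, ENNReal.ofReal (1 / f θ) ∂volume := by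
    intro t
    have hφ2 : Measurable fun θ => (ENNReal.ofReal (Y θ))^2 := hφ.pow_const 2
    rw [← lintegral_map hφ2 (hXmeas t), hXdist t,
      lintegral_withDensity_eq_lintegral_mul _ hdens hφ2]
    simpa using aux_E2 f hf Z hZpos B hB hBsub hv
  have hYint : ∀ t, Integrable (fun ω => Y (X t ω)) ℙ := by
    intro t
    refine ⟨(hYmeas.comp (hXmeas t)).aestronglyMeasurable, ?_⟩
    rw [hasFiniteIntegral_iff_ofReal (ae_of_all _ fun ω => hYnn _), hYl t]
    exact ENNReal.ofReal_lt_top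
  have hYmean : ∀ t, ∫ ω, Y (X t ω) ∂ℙ = 1/Z := by
    intro t
    rw [integral_eq_lintegral_of_nonneg_ae (ae_of_all _ fun ω => hYnn _)
      (hYmeas.comp (hXmeas t)).aestronglyMeasurable, hYl t,
      ENNReal.toReal_ofReal (by positivity)]
  set S : Ω → ℝ := fun ω => (1/(M:ℝ)) * ∑ t : Fin M, Y (X t ω) with hSdef
  have hSmeas : Measurable S :=
    measurable_const.mul (Finset.measurable_sum _ fun t _ => hYmeas.comp (hXmeas t))
  have hSnn : ∀ ω, 0 ≤ S ω := fun ω => mul_nonneg (by positivity)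
    (Finset.sum_nonneg fun t _ => hYnn _)
  have hSmean : ∫ ω, S ω ∂ℙ = 1/Z := by
    simp only [hSdef]
    rw [integral_const_mul, integral_finset_sum _ fun t _ => hYint t]
    simp only [hYmean]
    rw [Finset.sum_const, Finset.card_univ, Fintype.card_fin, nsmul_eq_mul]
    field_simp
  have hEvar : evariance S ℙ = ∫⁻ ω, ENNReal.ofReal ((S ω - 1/Z)^2) ∂ℙ := by
    rw [evariance_eq_lintegral_ofReal]
    have : ℙ[S] = 1/Z := hSmean
    rw [this]
  have key : ∀ ω, ENNReal.ofReal ((S ω - 1/Z)^2) + ENNReal.ofReal (2*(1/Z)*S ω)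
      = ENNReal.ofReal ((S ω)^2) + ENNReal.ofReal ((1/Z)^2) := by
    intro ω
    rw [← ENNReal.ofReal_add (sq_nonneg _)
        (mul_nonneg (by positivity) (hSnn ω)),
      ← ENNReal.ofReal_add (sq_nonneg _) (sq_nonneg _)]
    congr 1; ring
  have hS1 : ∫⁻ ω, ENNReal.ofReal (S ω) ∂ℙ = ENNReal.ofReal (1/Z) := by
    have hptS : ∀ ω, ENNReal.ofReal (S ω)
        = ENNReal.ofReal (1/(M:ℝ)) * ∑ t : Fin M, ENNReal.ofReal (Y (X t ω)) := by
      intro ω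
      rw [hSdef]
      rw [ENNReal.ofReal_mul (by positivity), ENNReal.ofReal_sum_of_nonneg (fun t _ => hYnn _)]
    simp only [hptS]
    rw [lintegral_const_mul _ (Finset.measurable_sum _ fun t _ => hφX t),
      lintegral_finset_sum _ fun t _ => hφX t]
    simp only [hYl]
    rw [Finset.sum_const, Finset.card_univ, Fintype.card_fin, nsmul_eq_mul,
      (ENNReal.ofReal_natCast M).symm,
      ← ENNReal.ofReal_mul (by positivity), ← ENNReal.ofReal_mul (by positivity)]
    congr 1
    field_simp
  have h2mS : ∫⁻ ω, ENNReal.ofReal (2*(1/Z)*S ω) ∂ℙ = ENNReal.ofReal (2*(1/Z)^2) := by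
    have hpt : ∀ ω, ENNReal.ofReal (2*(1/Z)*S ω)
        = ENNReal.ofReal (2*(1/Z)) * ENNReal.ofReal (S ω) := by
      intro ω; rw [← ENNReal.ofReal_mul (by positivity)]
    simp only [hpt]
    have hSφ : Measurable fun ω => ENNReal.ofReal (S ω) := ENNReal.measurable_ofReal.comp hSmeas
    rw [lintegral_const_mul _ hSφ, hS1,
      ← ENNReal.ofReal_mul (by positivity)]
    congr 1; ring
  have hterm : ∀ t s : Fin M, ∫⁻ ω, ENNReal.ofReal (Y (X t ω)) * ENNReal.ofReal (Y (X s ω)) ∂ℙ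
      = if t = s then
          ENNReal.ofReal (1 / (v^2 * Z)) * ∫⁻ θ in B, ENNReal.ofReal (1 / f θ) ∂volume
        else (ENNReal.ofReal (1/Z))^2 := by
    intro t s
    by_cases hts : t = s
    · subst hts
      simp only [if_pos rfl]
      have hsq : ∀ ω, ENNReal.ofReal (Y (X t ω)) * ENNReal.ofReal (Y (X t ω))
          = (ENNReal.ofReal (Y (X t ω)))^2 := fun ω => (sq _).symm
      simp only [hsq]
      exact hE2l t
    · simp only [if_neg hts]
      have hind : IndepFun (fun ω => ENNReal.ofReal (Y (X t ω)))
          (fun ω => ENNReal.ofReal (Y (X s ω))) ℙ :=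
        (hXindep.indepFun hts).comp hφ hφ
      have h := lintegral_mul_eq_lintegral_mul_lintegral_of_indepFun
        (hφX t) (hφX s) hind
      rw [hYl t, hYl s, ← sq] at h
      simpa [Pi.mul_apply] using h
  have hS2 : ∫⁻ ω, ENNReal.ofReal ((S ω)^2) ∂ℙ
      = ENNReal.ofReal ((1/(M:ℝ))^2) *
        (∑ t : Fin M, ∑ s : Fin M, (if t = s then
          ENNReal.ofReal (1 / (v^2 * Z)) * ∫⁻ θ in B, ENNReal.ofReal (1 / f θ) ∂volume
          else (ENNReal.ofReal (1/Z))^2)) := by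
    have hpt : ∀ ω, ENNReal.ofReal ((S ω)^2)
        = ENNReal.ofReal ((1/(M:ℝ))^2) * ∑ t : Fin M, ∑ s : Fin M,
            ENNReal.ofReal (Y (X t ω)) * ENNReal.ofReal (Y (X s ω)) := by
      intro ω
      have hreal : (S ω)^2 = (1/(M:ℝ))^2 * ∑ t : Fin M, ∑ s : Fin M, Y (X t ω) * Y (X s ω) := by
        rw [hSdef]
        rw [mul_pow, sq (∑ t : Fin M, Y (X t ω)), Finset.sum_mul_sum]
      rw [hreal, ENNReal.ofReal_mul (by positivity),
        ENNReal.ofReal_sum_of_nonneg (fun t _ => Finset.sum_nonneg fun s _ =>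
          mul_nonneg (hYnn _) (hYnn _))]
      congr 1
      refine Finset.sum_congr rfl fun t _ => ?_
      rw [ENNReal.ofReal_sum_of_nonneg (fun s _ => mul_nonneg (hYnn _) (hYnn _))]
      refine Finset.sum_congr rfl fun s _ => ?_
      rw [ENNReal.ofReal_mul (hYnn _)]
    simp only [hpt]
    rw [lintegral_const_mul _ (Finset.measurable_sum _ fun t _ =>
        Finset.measurable_sum _ fun s _ => (hφX t).fun_mul (hφX s)),
      lintegral_finset_sum _ fun t _ =>
        Finset.measurable_sum _ fun s _ => (hφX t).fun_mul (hφX s)]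
    congr 1
    refine Finset.sum_congr rfl fun t _ => ?_
    rw [lintegral_finset_sum _ fun s _ => (hφX t).fun_mul (hφX s)]
    exact Finset.sum_congr rfl fun s _ => hterm t s
  calc evariance S ℙ + ENNReal.ofReal (2*(1/Z)^2)
      = ∫⁻ ω, ENNReal.ofReal ((S ω - 1/Z)^2) ∂ℙ + ∫⁻ ω, ENNReal.ofReal (2*(1/Z)*S ω) ∂ℙ := by
        rw [hEvar, h2mS]
    _ = ∫⁻ ω, (ENNReal.ofReal ((S ω - 1/Z)^2) + ENNReal.ofReal (2*(1/Z)*S ω)) ∂ℙ :=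
        (lintegral_add_left (ENNReal.measurable_ofReal.comp
          ((hSmeas.sub measurable_const).pow_const 2)) _).symm
    _ = ∫⁻ ω, (ENNReal.ofReal ((S ω)^2) + ENNReal.ofReal ((1/Z)^2)) ∂ℙ := lintegral_congr key
    _ = ∫⁻ ω, ENNReal.ofReal ((S ω)^2) ∂ℙ + ENNReal.ofReal ((1/Z)^2) := by
        rw [lintegral_add_right _ measurable_const, lintegral_const, measure_univ, mul_one]
    _ = _ := by rw [hS2]


private lemma aux_q {R : ℕ} (f : (Fin R → ℝ) → ℝ) (hf : Measurable f)
    (Z : ℝ) (hZpos : 0 < Z)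
    (hlint : ∫⁻ θ, ENNReal.ofReal (f θ) ∂volume = ENNReal.ofReal Z)
    (hlevel : ∀ q : ℝ, 0 < q → volume {θ | f θ = q} = 0)
    (A : Set (Fin R → ℝ)) (hA : MeasurableSet A)
    (hApos : 0 < volume A) (hAfin : volume A < ⊤)
    (hAsupp : A ⊆ {θ | 0 < f θ}) :
    ∃ q : ℝ, 0 < q ∧ 0 < volume {θ | q < f θ} ∧ volume {θ | q < f θ} < ⊤ ∧
      0 < ∫⁻ θ in {θ | q < f θ}, ENNReal.ofReal (f θ / Z) ∂volume ∧
      ENNReal.ofReal (1 / ((volume {θ | q < f θ}).toReal^2 * Z)) *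
          ∫⁻ θ in {θ | q < f θ}, ENNReal.ofReal (1 / f θ) ∂volume
        ≤ ENNReal.ofReal (1 / ((volume A).toReal^2 * Z)) *
          ∫⁻ θ in A, ENNReal.ofReal (1 / f θ) ∂volume := by
  have hmeasq : ∀ q : ℝ, MeasurableSet {θ | q < f θ} :=
    fun q => measurableSet_lt measurable_const hf
  have hinvmeas : Measurable fun θ => ENNReal.ofReal (1 / f θ) :=
    ENNReal.measurable_ofReal.comp (measurable_const.div hf)
  have hmono : ∀ {a b : ℝ}, a ≤ b → {θ | b < f θ} ⊆ {θ | a < f θ} :=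
    fun hab θ hθ => lt_of_le_of_lt hab hθ
  have hbound : ∀ q : ℝ, 0 < q → ENNReal.ofReal q * volume {θ | q < f θ} ≤ ENNReal.ofReal Z := by
    intro q hq
    calc ENNReal.ofReal q * volume {θ | q < f θ}
        = ∫⁻ _ in {θ | q < f θ}, ENNReal.ofReal q ∂volume := (setLIntegral_const _ _).symm
      _ ≤ ∫⁻ θ in {θ | q < f θ}, ENNReal.ofReal (f θ) ∂volume :=
          setLIntegral_mono (ENNReal.measurable_ofReal.comp hf)
            (fun θ hθ => ENNReal.ofReal_le_ofReal (le_of_lt hθ))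
      _ ≤ ∫⁻ θ, ENNReal.ofReal (f θ) ∂volume := setLIntegral_le_lintegral _ _
      _ = ENNReal.ofReal Z := hlint
  have hfin : ∀ q : ℝ, 0 < q → volume {θ | q < f θ} < ⊤ := by
    intro q hq
    rw [lt_top_iff_ne_top]
    intro htop
    have := hbound q hq
    rw [htop, ENNReal.mul_top (by simpa using (ENNReal.ofReal_pos.mpr hq).ne')] at this
    exact absurd (top_le_iff.mp this) ENNReal.ofReal_ne_top
  have hνpos : ∀ q : ℝ, 0 < q → 0 < volume {θ | q < f θ} →
      0 < ∫⁻ θ in {θ | q < f θ}, ENNReal.ofReal (f θ / Z) ∂volume := by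
    intro q hq hvol
    have h1 : ENNReal.ofReal (q / Z) * volume {θ | q < f θ}
        ≤ ∫⁻ θ in {θ | q < f θ}, ENNReal.ofReal (f θ / Z) ∂volume := by
      rw [← setLIntegral_const]
      exact setLIntegral_mono (ENNReal.measurable_ofReal.comp (hf.div_const Z))
        (fun θ hθ => ENNReal.ofReal_le_ofReal ((div_le_div_iff_of_pos_right hZpos).mpr (le_of_lt hθ)))
    refine lt_of_lt_of_le ?_ h1
    exact ENNReal.mul_pos (ENNReal.ofReal_pos.mpr (by positivity)).ne' hvol.ne'
  have hUgen : ∀ c : ℝ, {θ | c < f θ} = ⋃ n : ℕ, {θ | c + 1/((n:ℝ)+1) < f θ} := by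
    intro c
    ext θ
    simp only [Set.mem_setOf_eq, Set.mem_iUnion]
    constructor
    · intro h
      obtain ⟨n, hn⟩ := exists_nat_one_div_lt (sub_pos.mpr h)
      exact ⟨n, by linarith⟩
    · rintro ⟨n, hn⟩
      have : 0 < 1/((n:ℝ)+1) := by positivity
      linarith
  have hdirgen : ∀ c : ℝ, Directed (· ⊆ ·) (fun n : ℕ => {θ | c + 1/((n:ℝ)+1) < f θ}) := by
    intro c n m
    have h1 : c + 1/(((max n m : ℕ):ℝ)+1) ≤ c + 1/((n:ℝ)+1) := by
      gcongr
      exact_mod_cast le_max_left n m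
    have h2 : c + 1/(((max n m : ℕ):ℝ)+1) ≤ c + 1/((m:ℝ)+1) := by
      gcongr
      exact_mod_cast le_max_right n m
    exact ⟨max n m, hmono h1, hmono h2⟩
  set T : Set ℝ := {q : ℝ | 0 < q ∧ volume {θ | q < f θ} ≤ volume A} with hTdef
  have hTbdd : BddBelow T := ⟨0, fun x hx => hx.1.le⟩
  have haR : 0 < (volume A).toReal := ENNReal.toReal_pos hApos.ne' hAfin.ne
  have hTne : T.Nonempty := by
    refine ⟨Z / (volume A).toReal, by positivity, ?_⟩
    have h1 := hbound _ (show (0:ℝ) < Z / (volume A).toReal by positivity)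
    have h2 : ENNReal.ofReal Z ≤ ENNReal.ofReal (Z / (volume A).toReal) * volume A := by
      have hrw : ENNReal.ofReal (Z / (volume A).toReal) * volume A
          = ENNReal.ofReal (Z / (volume A).toReal * (volume A).toReal) := by
        rw [ENNReal.ofReal_mul (by positivity), ENNReal.ofReal_toReal hAfin.ne]
      rw [hrw, div_mul_cancel₀ _ haR.ne']
    exact (ENNReal.mul_le_mul_iff_right (ENNReal.ofReal_pos.mpr (by positivity)).ne'
      ENNReal.ofReal_ne_top).mp (h1.trans h2)
  have hTup : ∀ q : ℝ, sInf T < q → volume {θ | q < f θ} ≤ volume A := by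
    intro q hq
    obtain ⟨t, htT, htq⟩ := (csInf_lt_iff hTbdd hTne).mp hq
    exact le_trans (measure_mono (hmono htq.le)) htT.2
  by_cases hq0 : 0 < sInf T
  · -- Case 1 : the HPD region with volume exactly that of A
    set q₀ := sInf T with hq₀def
    have hrc : volume {θ | q₀ < f θ} ≤ volume A := by
      rw [hUgen q₀, Directed.measure_iUnion (hdirgen q₀)]
      exact iSup_le fun n => hTup _ (lt_add_of_pos_right _ (by positivity))
    have hqnpos : ∀ n : ℕ, 0 < q₀ - q₀/((n:ℝ)+2) := by
      intro n
      have h2 : q₀/((n:ℝ)+2) < q₀ :=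
        div_lt_self hq0 (by push_cast; linarith [Nat.cast_nonneg (α := ℝ) n])
      linarith
    have hqnlt : ∀ n : ℕ, q₀ - q₀/((n:ℝ)+2) < q₀ := by
      intro n
      have : 0 < q₀/((n:ℝ)+2) := by positivity
      linarith
    have hI : {θ | q₀ ≤ f θ} = ⋂ n : ℕ, {θ | q₀ - q₀/((n:ℝ)+2) < f θ} := by
      ext θ
      simp only [Set.mem_setOf_eq, Set.mem_iInter]
      constructor
      · intro h n
        exact lt_of_lt_of_le (hqnlt n) h
      · intro h
        by_contra hlt
        push_neg at hlt
        obtain ⟨n, hn⟩ := exists_nat_one_div_lt (div_pos (sub_pos.mpr hlt) hq0)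
        have h1 : q₀ * (1/((n:ℝ)+1)) < q₀ * ((q₀ - f θ)/q₀) :=
          mul_lt_mul_of_pos_left hn hq0
        rw [mul_div_cancel₀ _ hq0.ne', mul_one_div] at h1
        have h2 : q₀/((n:ℝ)+2) ≤ q₀/((n:ℝ)+1) :=
          div_le_div_of_nonneg_left hq0.le (by positivity) (by linarith)
        have h3 := h n
        linarith
    have hdir2 : Directed (· ⊇ ·) (fun n : ℕ => {θ | q₀ - q₀/((n:ℝ)+2) < f θ}) := by
      intro n m
      have h1 : q₀ - q₀/((n:ℝ)+2) ≤ q₀ - q₀/(((max n m : ℕ):ℝ)+2) := by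
        have : q₀/(((max n m : ℕ):ℝ)+2) ≤ q₀/((n:ℝ)+2) :=
          div_le_div_of_nonneg_left hq0.le (by positivity)
            (by have : (n:ℝ) ≤ ((max n m : ℕ):ℝ) := by exact_mod_cast le_max_left n m
                linarith)
        linarith
      have h2 : q₀ - q₀/((m:ℝ)+2) ≤ q₀ - q₀/(((max n m : ℕ):ℝ)+2) := by
        have : q₀/(((max n m : ℕ):ℝ)+2) ≤ q₀/((m:ℝ)+2) :=
          div_le_div_of_nonneg_left hq0.le (by positivity)
            (by have : (m:ℝ) ≤ ((max n m : ℕ):ℝ) := by exact_mod_cast le_max_right n m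
                linarith)
        linarith
      exact ⟨max n m, hmono h1, hmono h2⟩
    have hlc : volume A ≤ volume {θ | q₀ ≤ f θ} := by
      rw [hI, Directed.measure_iInter (fun n => (hmeasq _).nullMeasurableSet) hdir2
        ⟨0, (hfin _ (hqnpos 0)).ne⟩]
      refine le_iInf fun n => ?_
      by_contra hle
      push_neg at hle
      have hmem : (q₀ - q₀/((n:ℝ)+2)) ∈ T := ⟨hqnpos n, hle.le⟩
      have hlt' : q₀ - q₀/((n:ℝ)+2) < sInf T := by rw [← hq₀def]; exact hqnlt n
      exact absurd hmem (notMem_of_lt_csInf hlt' hTbdd)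
    have hsplit : volume {θ | q₀ ≤ f θ} ≤ volume {θ | q₀ < f θ} + volume {θ | f θ = q₀} := by
      refine le_trans (measure_mono ?_) (measure_union_le _ _)
      intro θ hθ
      have hθ' : q₀ ≤ f θ := hθ
      rcases lt_or_eq_of_le hθ' with h | h
      · exact Or.inl h
      · exact Or.inr h.symm
    have heq : volume {θ | q₀ < f θ} = volume A := by
      refine le_antisymm hrc ?_
      calc volume A ≤ volume {θ | q₀ ≤ f θ} := hlc
        _ ≤ volume {θ | q₀ < f θ} + volume {θ | f θ = q₀} := hsplit
        _ = volume {θ | q₀ < f θ} := by rw [hlevel q₀ hq0, add_zero]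
    have hHvolpos : 0 < volume {θ | q₀ < f θ} := heq ▸ hApos
    refine ⟨q₀, hq0, hHvolpos, hfin _ hq0, hνpos _ hq0 hHvolpos, ?_⟩
    rw [heq]
    apply mul_le_mul_right
    set H := {θ | q₀ < f θ} with hHdef
    have hHm := hmeasq q₀
    have hHAfin : volume (H ∩ A) ≠ ⊤ :=
      (lt_of_le_of_lt (measure_mono Set.inter_subset_right) hAfin).ne
    have hdiffeq : volume (H \ A) = volume (A \ H) := by
      have h1 := measure_inter_add_diff (μ := volume) H hA
      have h2 := measure_inter_add_diff (μ := volume) A hHm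
      rw [Set.inter_comm A H] at h2
      rw [heq] at h1
      rw [← h1] at h2
      exact ((ENNReal.add_right_inj hHAfin).mp h2).symm
    have hdisj1 : Disjoint (H ∩ A) (H \ A) :=
      Set.disjoint_left.mpr fun θ hθ hθ' => hθ'.2 hθ.2
    have hdisj2 : Disjoint (A ∩ H) (A \ H) :=
      Set.disjoint_left.mpr fun θ hθ hθ' => hθ'.2 hθ.2
    have hsplitH : ∫⁻ θ in H, ENNReal.ofReal (1/f θ) ∂volume
        = (∫⁻ θ in H ∩ A, ENNReal.ofReal (1/f θ) ∂volume)
          + ∫⁻ θ in H \ A, ENNReal.ofReal (1/f θ) ∂volume := by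
      rw [← lintegral_union (hHm.diff hA) hdisj1, Set.inter_union_diff]
    have hsplitA : ∫⁻ θ in A, ENNReal.ofReal (1/f θ) ∂volume
        = (∫⁻ θ in A ∩ H, ENNReal.ofReal (1/f θ) ∂volume)
          + ∫⁻ θ in A \ H, ENNReal.ofReal (1/f θ) ∂volume := by
      rw [← lintegral_union (hA.diff hHm) hdisj2, Set.inter_union_diff]
    have hb1 : ∫⁻ θ in H \ A, ENNReal.ofReal (1/f θ) ∂volume
        ≤ ENNReal.ofReal (1/q₀) * volume (H \ A) := by
      rw [← setLIntegral_const]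
      exact setLIntegral_mono measurable_const fun θ hθ =>
        ENNReal.ofReal_le_ofReal (one_div_le_one_div_of_le hq0 (le_of_lt hθ.1))
    have hb2 : ENNReal.ofReal (1/q₀) * volume (A \ H) ≤
        ∫⁻ θ in A \ H, ENNReal.ofReal (1/f θ) ∂volume := by
      rw [← setLIntegral_const]
      refine setLIntegral_mono hinvmeas fun θ hθ => ENNReal.ofReal_le_ofReal ?_
      exact one_div_le_one_div_of_le (hAsupp hθ.1) (le_of_not_gt hθ.2)
    calc ∫⁻ θ in H, ENNReal.ofReal (1/f θ) ∂volume
        = (∫⁻ θ in H ∩ A, ENNReal.ofReal (1/f θ) ∂volume)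
          + ∫⁻ θ in H \ A, ENNReal.ofReal (1/f θ) ∂volume := hsplitH
      _ ≤ (∫⁻ θ in H ∩ A, ENNReal.ofReal (1/f θ) ∂volume)
          + ENNReal.ofReal (1/q₀) * volume (H \ A) := add_le_add_right hb1 _
      _ = (∫⁻ θ in H ∩ A, ENNReal.ofReal (1/f θ) ∂volume)
          + ENNReal.ofReal (1/q₀) * volume (A \ H) := by rw [hdiffeq]
      _ ≤ (∫⁻ θ in H ∩ A, ENNReal.ofReal (1/f θ) ∂volume)
          + ∫⁻ θ in A \ H, ENNReal.ofReal (1/f θ) ∂volume := add_le_add_right hb2 _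
      _ = ∫⁻ θ in A, ENNReal.ofReal (1/f θ) ∂volume := by
          rw [Set.inter_comm H A]
          exact hsplitA.symm
  · -- Case 2 : the support has (a.e.) the same volume as A
    have hall : ∀ q : ℝ, 0 < q → volume {θ | q < f θ} ≤ volume A :=
      fun q hq => hTup q (lt_of_le_of_lt (not_lt.mp hq0) hq)
    have hS0vol : volume {θ | 0 < f θ} ≤ volume A := by
      rw [show {θ | (0:ℝ) < f θ} = ⋃ n : ℕ, {θ | 0 + 1/((n:ℝ)+1) < f θ} from hUgen 0,
        Directed.measure_iUnion (hdirgen 0)]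
      exact iSup_le fun n => hall _ (by positivity)
    have hdiffnull : volume ({θ | 0 < f θ} \ A) = 0 := by
      rw [measure_diff hAsupp hA.nullMeasurableSet hAfin.ne]
      exact tsub_eq_zero_of_le hS0vol
    have hex : ∃ n : ℕ, 0 < volume {θ | 0 + 1/((n:ℝ)+1) < f θ} := by
      by_contra hno
      push_neg at hno
      have h0 : volume {θ | (0:ℝ) < f θ} = 0 := by
        rw [hUgen 0, Directed.measure_iUnion (hdirgen 0)]
        exact le_antisymm (iSup_le fun n => hno n) zero_le
      have h1 : volume A ≤ volume {θ | (0:ℝ) < f θ} := measure_mono hAsupp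
      rw [h0] at h1
      exact absurd (le_antisymm h1 zero_le) hApos.ne'
    obtain ⟨n₀, hn₀⟩ := hex
    simp only [zero_add] at hn₀
    set ε : ℝ := 1/((n₀:ℝ)+1) with hεdef
    have hε : 0 < ε := by positivity
    have hIApos : 0 < ∫⁻ θ in A, ENNReal.ofReal (1/f θ) ∂volume := by
      have hAU : A = ⋃ m : ℕ, (A ∩ {θ | f θ < (m:ℝ)+1}) := by
        ext θ
        simp only [Set.mem_iUnion, Set.mem_inter_iff, Set.mem_setOf_eq]
        constructor
        · intro hθ
          obtain ⟨m, hm⟩ := exists_nat_gt (f θ)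
          exact ⟨m, hθ, by linarith⟩
        · rintro ⟨m, hm, _⟩
          exact hm
      have hdirA : Directed (· ⊆ ·) (fun m : ℕ => A ∩ {θ | f θ < (m:ℝ)+1}) := by
        intro n m
        refine ⟨max n m, Set.inter_subset_inter_right _ ?_, Set.inter_subset_inter_right _ ?_⟩
        · intro θ hθ
          have hθ' : f θ < (n:ℝ)+1 := hθ
          have hc : (n:ℝ) ≤ ((max n m : ℕ):ℝ) := by exact_mod_cast le_max_left n m
          show f θ < ((max n m : ℕ):ℝ)+1
          linarith
        · intro θ hθ
          have hθ' : f θ < (m:ℝ)+1 := hθ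
          have hc : (m:ℝ) ≤ ((max n m : ℕ):ℝ) := by exact_mod_cast le_max_right n m
          show f θ < ((max n m : ℕ):ℝ)+1
          linarith
      have hexm : ∃ m : ℕ, 0 < volume (A ∩ {θ | f θ < (m:ℝ)+1}) := by
        by_contra hno
        push_neg at hno
        have h0 : volume A = 0 := by
          conv_lhs => rw [hAU]
          rw [Directed.measure_iUnion hdirA]
          exact le_antisymm (iSup_le fun m => hno m) zero_le
        exact absurd h0 hApos.ne'
      obtain ⟨m, hm⟩ := hexm
      have hlow : ENNReal.ofReal (1/((m:ℝ)+1)) * volume (A ∩ {θ | f θ < (m:ℝ)+1})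
          ≤ ∫⁻ θ in A ∩ {θ | f θ < (m:ℝ)+1}, ENNReal.ofReal (1/f θ) ∂volume := by
        rw [← setLIntegral_const]
        refine setLIntegral_mono hinvmeas fun θ hθ => ENNReal.ofReal_le_ofReal ?_
        exact one_div_le_one_div_of_le (hAsupp hθ.1) (le_of_lt hθ.2)
      refine lt_of_lt_of_le (lt_of_lt_of_le ?_ hlow) (lintegral_mono_set Set.inter_subset_left)
      exact ENNReal.mul_pos (ENNReal.ofReal_pos.mpr (by positivity)).ne' hm.ne'
    by_cases hIA : (∫⁻ θ in A, ENNReal.ofReal (1/f θ) ∂volume) = ⊤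
    · refine ⟨ε, hε, hn₀, hfin _ hε, hνpos _ hε hn₀, ?_⟩
      rw [hIA, ENNReal.mul_top (ENNReal.ofReal_pos.mpr (by positivity)).ne']
      exact le_top
    · set V : ℝ := (volume A).toReal with hVdef
      set iA : ℝ := (∫⁻ θ in A, ENNReal.ofReal (1/f θ) ∂volume).toReal with hiAdef
      have hiApos : 0 < iA := ENNReal.toReal_pos hIApos.ne' hIA
      set q : ℝ := min ε (V/(2*iA)) with hqdef
      have hqpos : 0 < q := lt_min hε (by positivity)
      have hqε : q ≤ ε := min_le_left _ _
      have hq2 : q ≤ V/(2*iA) := min_le_right _ _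
      set H := {θ | q < f θ} with hHdef
      have hHvolpos : 0 < volume H := lt_of_lt_of_le hn₀ (measure_mono (hmono hqε))
      have hHfin := hfin q hqpos
      have hHsub : H ⊆ {θ | 0 < f θ} := fun θ hθ => lt_trans hqpos hθ
      have hHdiffnull : volume (H \ A) = 0 :=
        measure_mono_null (Set.diff_subset_diff_left hHsub) hdiffnull
      have hdisj1 : Disjoint (H ∩ A) (H \ A) :=
        Set.disjoint_left.mpr fun θ hθ hθ' => hθ'.2 hθ.2
      have hdisj2 : Disjoint (A ∩ H) (A \ H) :=
        Set.disjoint_left.mpr fun θ hθ hθ' => hθ'.2 hθ.2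
      have hIHsplit : (∫⁻ θ in H, ENNReal.ofReal (1/f θ) ∂volume)
          = ∫⁻ θ in H ∩ A, ENNReal.ofReal (1/f θ) ∂volume := by
        conv_lhs => rw [← Set.inter_union_diff H A]
        rw [lintegral_union ((hmeasq q).diff hA) hdisj1,
          setLIntegral_measure_zero _ _ hHdiffnull, add_zero]
      have hIHle : (∫⁻ θ in H, ENNReal.ofReal (1/f θ) ∂volume)
          ≤ ∫⁻ θ in A, ENNReal.ofReal (1/f θ) ∂volume := by
        rw [hIHsplit]
        exact lintegral_mono_set Set.inter_subset_right
      have hIHfin : (∫⁻ θ in H, ENNReal.ofReal (1/f θ) ∂volume) ≠ ⊤ :=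
        (lt_of_le_of_lt hIHle (lt_top_iff_ne_top.mpr hIA)).ne
      set iH : ℝ := (∫⁻ θ in H, ENNReal.ofReal (1/f θ) ∂volume).toReal with hiHdef
      have hiHnn : 0 ≤ iH := ENNReal.toReal_nonneg
      have hvolinter : volume (H ∩ A) = volume H := by
        have h := measure_inter_add_diff (μ := volume) H hA
        rw [hHdiffnull, add_zero] at h
        exact h
      have hADfin : volume (A \ H) ≠ ⊤ :=
        (lt_of_le_of_lt (measure_mono Set.diff_subset) hAfin).ne
      set vH : ℝ := (volume H).toReal with hvHdef
      have hvHpos : 0 < vH := ENNReal.toReal_pos hHvolpos.ne' hHfin.ne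
      set d : ℝ := (volume (A \ H)).toReal with hddef
      have hdnn : 0 ≤ d := ENNReal.toReal_nonneg
      have hVpos : 0 < V := haR
      have hdsum : vH + d = V := by
        have h := measure_inter_add_diff (μ := volume) A (hmeasq q)
        rw [Set.inter_comm, hvolinter] at h
        calc vH + d = ((volume H) + volume (A \ H)).toReal := by
              rw [ENNReal.toReal_add hHfin.ne hADfin]
          _ = V := by rw [h]
      have hb2 : ENNReal.ofReal (1/q) * volume (A \ H) ≤
          ∫⁻ θ in A \ H, ENNReal.ofReal (1/f θ) ∂volume := by
        rw [← setLIntegral_const]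
        refine setLIntegral_mono hinvmeas fun θ hθ => ENNReal.ofReal_le_ofReal ?_
        exact one_div_le_one_div_of_le (hAsupp hθ.1) (le_of_not_gt hθ.2)
      have hIAsplit : (∫⁻ θ in A, ENNReal.ofReal (1/f θ) ∂volume)
          = (∫⁻ θ in A ∩ H, ENNReal.ofReal (1/f θ) ∂volume)
            + ∫⁻ θ in A \ H, ENNReal.ofReal (1/f θ) ∂volume := by
        rw [← lintegral_union (hA.diff (hmeasq q)) hdisj2, Set.inter_union_diff]
      have hchain : (∫⁻ θ in H, ENNReal.ofReal (1/f θ) ∂volume)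
          + ENNReal.ofReal (1/q) * volume (A \ H)
          ≤ ∫⁻ θ in A, ENNReal.ofReal (1/f θ) ∂volume := by
        rw [hIAsplit]
        refine add_le_add ?_ hb2
        rw [hIHsplit, Set.inter_comm]
      have hmulfin : ENNReal.ofReal (1/q) * volume (A \ H) ≠ ⊤ :=
        ENNReal.mul_ne_top ENNReal.ofReal_ne_top hADfin
      have hreal : iH + (1/q) * d ≤ iA := by
        have h1 := ENNReal.toReal_mono hIA hchain
        rw [ENNReal.toReal_add hIHfin hmulfin, ENNReal.toReal_mul,
          ENNReal.toReal_ofReal (by positivity)] at h1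
        exact h1
      have hu2 : 2*iA ≤ V*(1/q) := by
        rw [mul_one_div, le_div_iff₀ hqpos]
        calc 2*iA*q = q*(2*iA) := by ring
          _ ≤ V := by
            have := (le_div_iff₀ (by positivity : (0:ℝ) < 2*iA)).mp hq2
            linarith
      have a1 : (iH + (1/q)*d)*V^2 ≤ iA*V^2 :=
        mul_le_mul_of_nonneg_right hreal (sq_nonneg V)
      have a2 : (2*iA)*(d*V) ≤ (V*(1/q))*(d*V) :=
        mul_le_mul_of_nonneg_right hu2 (mul_nonneg hdnn hVpos.le)
      have a3 : (0:ℝ) ≤ iA * d^2 := by positivity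
      have hkey : iH*V^2 ≤ iA*vH^2 := by
        have hgoal' : iH*V^2 ≤ iA*(V-d)^2 := by nlinarith [a1, a2, a3]
        calc iH*V^2 ≤ iA*(V-d)^2 := hgoal'
          _ = iA*vH^2 := by rw [show V - d = vH by linarith]
      refine ⟨q, hqpos, hHvolpos, hHfin, hνpos _ hqpos hHvolpos, ?_⟩
      rw [show (∫⁻ θ in H, ENNReal.ofReal (1/f θ) ∂volume) = ENNReal.ofReal iH from
          (ENNReal.ofReal_toReal hIHfin).symm,
        show (∫⁻ θ in A, ENNReal.ofReal (1/f θ) ∂volume) = ENNReal.ofReal iA from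
          (ENNReal.ofReal_toReal hIA).symm,
        ← ENNReal.ofReal_mul (by positivity), ← ENNReal.ofReal_mul (by positivity)]
      apply ENNReal.ofReal_le_ofReal
      rw [div_mul_eq_mul_div, div_mul_eq_mul_div, one_mul, one_mul,
        div_le_div_iff₀ (by positivity) (by positivity)]
      have hfin2 := mul_le_mul_of_nonneg_right hkey hZpos.le
      calc iH * (V^2*Z) = iH*V^2*Z := by ring
        _ ≤ iA*vH^2*Z := hfin2
        _ = iA*(vH^2*Z) := by ring


/-- Optimality of HPD truncation (Theorem 1): assume `π(θ)L(θ)` is continuous on its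
support and non-constant in the sense that every level set `{θ : π(θ)L(θ) = q}`,
`q > 0`, has Lebesgue measure zero. If `θ⁽¹⁾,…,θ⁽ᴹ⁾` are i.i.d. draws from the
posterior, then for every measurable set `A` of finite nonzero volume contained in the
posterior support there exists `α ∈ (0,1]` (with associated quantile `q_α` for which the
posterior probability of `H_α = {θ : π(θ)L(θ) > q_α}` equals `α`) such that the variance
of the truncated harmonic mean estimator with truncation set `H_α` is less than or equal
to the variance of the truncated harmonic mean estimator with truncation set `A`. -/
theorem thames_hpd_truncation_optimal
    {R : ℕ} (prior L : (Fin R → ℝ) → ℝ)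
    (hprior : Measurable prior) (hL : Measurable L)
    (hpriornn : ∀ θ, 0 ≤ prior θ) (hLnn : ∀ θ, 0 ≤ L θ)
    (Z : ℝ) (hZ : Z = ∫ θ, prior θ * L θ) (hZpos : 0 < Z)
    (hcont : ContinuousOn (fun θ => prior θ * L θ) {θ | 0 < prior θ * L θ})
    (hlevel : ∀ q : ℝ, 0 < q → volume {θ | prior θ * L θ = q} = 0)
    (A : Set (Fin R → ℝ)) (hA : MeasurableSet A)
    (hApos : 0 < volume A) (hAfin : volume A < ⊤)
    (hAsupp : A ⊆ {θ | 0 < prior θ * L θ})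
    {Ω : Type} [MeasureSpace Ω] [IsProbabilityMeasure (ℙ : Measure Ω)]
    (M : ℕ) (hM : 0 < M)
    (X : Fin M → Ω → (Fin R → ℝ))
    (hXmeas : ∀ t, Measurable (X t))
    (hXdist : ∀ t, Measure.map (X t) ℙ =
      volume.withDensity (fun θ => ENNReal.ofReal (prior θ * L θ / Z)))
    (hXindep : iIndepFun X ℙ) :
    ∃ α ∈ Set.Ioc (0 : ℝ) 1, ∃ qα : ℝ, 0 < qα ∧
      (volume.withDensity (fun θ => ENNReal.ofReal (prior θ * L θ / Z)))
          {θ | qα < prior θ * L θ} = ENNReal.ofReal α ∧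
      evariance (fun ω => (1 / (M : ℝ)) * ∑ t : Fin M,
          ({θ | qα < prior θ * L θ}).indicator (fun _ => (1 : ℝ)) (X t ω) /
            ((volume {θ | qα < prior θ * L θ}).toReal * (prior (X t ω) * L (X t ω)))) ℙ
        ≤ evariance (fun ω => (1 / (M : ℝ)) * ∑ t : Fin M,
            A.indicator (fun _ => (1 : ℝ)) (X t ω) /
              ((volume A).toReal * (prior (X t ω) * L (X t ω)))) ℙ := by
  have hf : Measurable fun θ : Fin R → ℝ => prior θ * L θ := hprior.mul hL
  have hfnn : ∀ θ, 0 ≤ prior θ * L θ := fun θ => mul_nonneg (hpriornn θ) (hLnn θ)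
  have hfint : Integrable (fun θ : Fin R → ℝ => prior θ * L θ) volume := by
    by_contra h
    rw [hZ, integral_undef h] at hZpos
    exact lt_irrefl 0 hZpos
  have hlint : ∫⁻ θ, ENNReal.ofReal (prior θ * L θ) ∂volume = ENNReal.ofReal Z := by
    rw [hZ]
    exact (ofReal_integral_eq_lintegral_ofReal hfint (ae_of_all _ hfnn)).symm
  obtain ⟨q, hq, hHvol, hHfin, hνHpos, hcomp⟩ :=
    aux_q (fun θ => prior θ * L θ) hf Z hZpos hlint hlevel A hA hApos hAfin hAsupp
  have hHmeas : MeasurableSet {θ | q < prior θ * L θ} := measurableSet_lt measurable_const hf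
  have hνH : (volume.withDensity (fun θ => ENNReal.ofReal (prior θ * L θ / Z)))
      {θ | q < prior θ * L θ}
      = ∫⁻ θ in {θ | q < prior θ * L θ}, ENNReal.ofReal (prior θ * L θ / Z) ∂volume :=
    withDensity_apply _ hHmeas
  have hνuniv : (volume.withDensity (fun θ => ENNReal.ofReal (prior θ * L θ / Z)))
      Set.univ = 1 := by
    rw [withDensity_apply _ MeasurableSet.univ, Measure.restrict_univ]
    have hpt : ∀ θ : Fin R → ℝ, ENNReal.ofReal (prior θ * L θ / Z)
        = ENNReal.ofReal (prior θ * L θ) * ENNReal.ofReal Z⁻¹ := by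
      intro θ
      rw [div_eq_mul_inv, ENNReal.ofReal_mul (hfnn θ)]
    simp only [hpt]
    have hfm : Measurable fun θ : Fin R → ℝ => ENNReal.ofReal (prior θ * L θ) :=
      ENNReal.measurable_ofReal.comp hf
    rw [lintegral_mul_const _ hfm, hlint,
      ← ENNReal.ofReal_mul hZpos.le, mul_inv_cancel₀ hZpos.ne', ENNReal.ofReal_one]
  have hνle1 : (volume.withDensity (fun θ => ENNReal.ofReal (prior θ * L θ / Z)))
      {θ | q < prior θ * L θ} ≤ 1 := by
    rw [← hνuniv]
    exact measure_mono (Set.subset_univ _)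
  have hνfin : (volume.withDensity (fun θ => ENNReal.ofReal (prior θ * L θ / Z)))
      {θ | q < prior θ * L θ} ≠ ⊤ := ne_top_of_le_ne_top ENNReal.one_ne_top hνle1
  have hνpos' : 0 < (volume.withDensity (fun θ => ENNReal.ofReal (prior θ * L θ / Z)))
      {θ | q < prior θ * L θ} := by
    rw [hνH]
    exact hνHpos
  refine ⟨((volume.withDensity (fun θ => ENNReal.ofReal (prior θ * L θ / Z)))
      {θ | q < prior θ * L θ}).toReal,
    ⟨ENNReal.toReal_pos hνpos'.ne' hνfin, ?_⟩, q, hq, (ENNReal.ofReal_toReal hνfin).symm, ?_⟩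
  · rw [← ENNReal.toReal_one]
    exact ENNReal.toReal_mono ENNReal.one_ne_top hνle1
  · -- the variance comparison
    have hHsub : ∀ θ ∈ {θ : Fin R → ℝ | q < prior θ * L θ}, 0 < prior θ * L θ :=
      fun θ hθ => lt_trans hq hθ
    have hAsub : ∀ θ ∈ A, 0 < prior θ * L θ := fun θ hθ => hAsupp hθ
    have hvH : 0 < (volume {θ | q < prior θ * L θ}).toReal :=
      ENNReal.toReal_pos hHvol.ne' hHfin.ne
    have hvA : 0 < (volume A).toReal := ENNReal.toReal_pos hApos.ne' hAfin.ne
    have e1 := aux_var (fun θ => prior θ * L θ) hf Z hZpos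
      {θ | q < prior θ * L θ} hHmeas hHsub hHfin hvH M hM X hXmeas hXdist hXindep
    have e2 := aux_var (fun θ => prior θ * L θ) hf Z hZpos
      A hA hAsub hAfin hvA M hM X hXmeas hXdist hXindep
    have hsum : (∑ t : Fin M, ∑ s : Fin M, (if t = s then
          ENNReal.ofReal (1 / ((volume {θ | q < prior θ * L θ}).toReal^2 * Z)) *
            ∫⁻ θ in {θ | q < prior θ * L θ}, ENNReal.ofReal (1 / (prior θ * L θ)) ∂volume
          else (ENNReal.ofReal (1/Z))^2))
        ≤ ∑ t : Fin M, ∑ s : Fin M, (if t = s then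
          ENNReal.ofReal (1 / ((volume A).toReal^2 * Z)) *
            ∫⁻ θ in A, ENNReal.ofReal (1 / (prior θ * L θ)) ∂volume
          else (ENNReal.ofReal (1/Z))^2) := by
      refine Finset.sum_le_sum fun t _ => Finset.sum_le_sum fun s _ => ?_
      by_cases hts : t = s
      · simp only [if_pos hts]
        exact hcomp
      · simp only [if_neg hts]
        exact le_rfl
    have hle : evariance (fun ω => (1 / (M : ℝ)) * ∑ t : Fin M,
          ({θ | q < prior θ * L θ}).indicator (fun _ => (1 : ℝ)) (X t ω) /
            ((volume {θ | q < prior θ * L θ}).toReal * (prior (X t ω) * L (X t ω)))) ℙ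
          + ENNReal.ofReal (2 * (1/Z)^2)
        ≤ evariance (fun ω => (1 / (M : ℝ)) * ∑ t : Fin M,
            A.indicator (fun _ => (1 : ℝ)) (X t ω) /
              ((volume A).toReal * (prior (X t ω) * L (X t ω)))) ℙ
          + ENNReal.ofReal (2 * (1/Z)^2) := by
      rw [e1, e2]
      exact add_le_add_left (mul_le_mul_right hsum _) _
    exact (ENNReal.add_le_add_iff_right ENNReal.ofReal_ne_top).mp hle
end

section
/- Regularity of the HPD volume: assume π(θ)L(θ) is continuous on its support and every level set {θ : π(θ)L(θ) = q}, q > 0, has Lebesgue measure zero, and for α ∈ (0,1) let H_α = {θ : π(θ)L(θ) > q_α} where q_α is the unique constant with posterior probability of H_α equal to α. Then the map α ↦ V(H_α) is strictly increasing and continuous on (0,1). -/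
open MeasureTheory

/-- Regularity of the HPD volume: assume `π(θ)L(θ)` is continuous on its support and
every level set `{θ : π(θ)L(θ) = q}`, `q > 0`, has Lebesgue measure zero, and for
`α ∈ (0,1)` let `H_α = {θ : π(θ)L(θ) > q_α}` where `q_α` is the unique constant with
posterior probability of `H_α` equal to `α`. Then the map `α ↦ V(H_α)` is strictly
increasing and continuous on `(0,1)`. -/
theorem hpd_volume_strictMono_continuous
    {R : ℕ} (prior L : (Fin R → ℝ) → ℝ)
    (hprior : Measurable prior) (hL : Measurable L)
    (hpriornn : ∀ θ, 0 ≤ prior θ) (hLnn : ∀ θ, 0 ≤ L θ)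
    (Z : ℝ) (hZ : Z = ∫ θ, prior θ * L θ) (hZpos : 0 < Z)
    (hcont : ContinuousOn (fun θ => prior θ * L θ) {θ | 0 < prior θ * L θ})
    (hlevel : ∀ q : ℝ, 0 < q → volume {θ | prior θ * L θ = q} = 0)
    (qα : ℝ → ℝ)
    (hqα : ∀ α ∈ Set.Ioo (0 : ℝ) 1, 0 < qα α ∧
      (volume.withDensity (fun θ => ENNReal.ofReal (prior θ * L θ / Z)))
          {θ | qα α < prior θ * L θ} = ENNReal.ofReal α) :
    StrictMonoOn (fun α => (volume {θ | qα α < prior θ * L θ}).toReal)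
        (Set.Ioo (0 : ℝ) 1) ∧
    ContinuousOn (fun α => (volume {θ | qα α < prior θ * L θ}).toReal)
        (Set.Ioo (0 : ℝ) 1) := by
  have hfm : Measurable (fun θ => prior θ * L θ) := hprior.mul hL
  set μ := volume.withDensity (fun θ => ENNReal.ofReal (prior θ * L θ / Z)) with hμdef
  have hmeas : ∀ q : ℝ, MeasurableSet {θ | q < prior θ * L θ} :=
    fun q => measurableSet_lt measurable_const hfm
  -- Lemma A: lower bound for μ on sets where the density is bounded below
  have hA : ∀ (c : ℝ), 0 < c → ∀ s : Set (Fin R → ℝ), MeasurableSet s →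
      s ⊆ {θ | c < prior θ * L θ} → ENNReal.ofReal (c / Z) * volume s ≤ μ s := by
    intro c hc s hs hsub
    rw [hμdef, withDensity_apply _ hs]
    calc ENNReal.ofReal (c / Z) * volume s
        = ∫⁻ _ in s, ENNReal.ofReal (c / Z) ∂volume := by
          rw [setLIntegral_const, mul_comm]
      _ ≤ ∫⁻ θ in s, ENNReal.ofReal (prior θ * L θ / Z) ∂volume := by
          refine setLIntegral_mono ((hfm.div_const Z).ennreal_ofReal) ?_
          intro θ hθ
          refine ENNReal.ofReal_le_ofReal ?_
          have h1 : c ≤ prior θ * L θ := le_of_lt (hsub hθ)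
          gcongr
  -- finiteness of the volumes
  have hfin : ∀ α ∈ Set.Ioo (0:ℝ) 1, volume {θ | qα α < prior θ * L θ} ≠ ⊤ := by
    intro α hα
    obtain ⟨hq, hμα⟩ := hqα α hα
    intro htop
    have h1 := hA (qα α) hq _ (hmeas _) (subset_refl _)
    rw [htop, hμα, ENNReal.mul_top (by
      simp only [ne_eq, ENNReal.ofReal_eq_zero, not_le]
      positivity)] at h1
    exact ENNReal.ofReal_ne_top (top_le_iff.mp h1)
  -- strict antitonicity of qα
  have hanti : ∀ α ∈ Set.Ioo (0:ℝ) 1, ∀ β ∈ Set.Ioo (0:ℝ) 1, α < β → qα β < qα α := by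
    intro α hα β hβ hab
    by_contra hle
    push_neg at hle
    have hsub : {θ | qα β < prior θ * L θ} ⊆ {θ | qα α < prior θ * L θ} :=
      fun θ hθ => lt_of_le_of_lt hle hθ
    have h1 := measure_mono (μ := μ) hsub
    rw [(hqα α hα).2, (hqα β hβ).2] at h1
    have h2 := (ENNReal.ofReal_le_ofReal_iff (le_of_lt hα.1)).mp h1
    linarith
  -- key decomposition
  have hkey : ∀ α ∈ Set.Ioo (0:ℝ) 1, ∀ β ∈ Set.Ioo (0:ℝ) 1, α < β →
      volume {θ | qα β < prior θ * L θ} = volume {θ | qα α < prior θ * L θ} +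
        volume ({θ | qα β < prior θ * L θ} \ {θ | qα α < prior θ * L θ}) ∧
      μ ({θ | qα β < prior θ * L θ} \ {θ | qα α < prior θ * L θ})
        = ENNReal.ofReal (β - α) := by
    intro α hα β hβ hab
    have hq := hanti α hα β hβ hab
    have hsub : {θ | qα α < prior θ * L θ} ⊆ {θ | qα β < prior θ * L θ} :=
      fun θ hθ => lt_trans hq hθ
    constructor
    · have h1 := measure_add_diff (μ := volume) (hmeas (qα α)).nullMeasurableSet
        {θ | qα β < prior θ * L θ}
      rw [Set.union_eq_self_of_subset_left hsub] at h1
      exact h1.symm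
    · rw [measure_diff hsub (hmeas (qα α)).nullMeasurableSet
        (by rw [(hqα α hα).2]; exact ENNReal.ofReal_ne_top),
        (hqα α hα).2, (hqα β hβ).2, ← ENNReal.ofReal_sub _ (le_of_lt hα.1)]
  -- strict monotonicity
  have hmono : StrictMonoOn (fun α => (volume {θ | qα α < prior θ * L θ}).toReal)
      (Set.Ioo (0:ℝ) 1) := by
    intro α hα β hβ hab
    obtain ⟨hvol, hμd⟩ := hkey α hα β hβ hab
    have hfinβ := hfin β hβ
    have hfinα := hfin α hα
    have hfinD : volume ({θ | qα β < prior θ * L θ} \ {θ | qα α < prior θ * L θ}) ≠ ⊤ := by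
      intro h
      rw [hvol, h, add_top] at hfinβ
      exact hfinβ rfl
    have hDpos : volume ({θ | qα β < prior θ * L θ} \ {θ | qα α < prior θ * L θ}) ≠ 0 := by
      intro h0
      have h1 : μ ({θ | qα β < prior θ * L θ} \ {θ | qα α < prior θ * L θ}) = 0 :=
        withDensity_absolutelyContinuous volume _ h0
      rw [hμd, ENNReal.ofReal_eq_zero] at h1
      linarith
    simp only
    rw [hvol, ENNReal.toReal_add hfinα hfinD]
    have h2 : 0 < (volume ({θ | qα β < prior θ * L θ} \ {θ | qα α < prior θ * L θ})).toReal :=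
      ENNReal.toReal_pos hDpos hfinD
    linarith
  -- quantitative continuity bound
  have hbound : ∀ α ∈ Set.Ioo (0:ℝ) 1, ∀ β ∈ Set.Ioo (0:ℝ) 1, α < β →
      (volume {θ | qα β < prior θ * L θ}).toReal
        - (volume {θ | qα α < prior θ * L θ}).toReal ≤ (β - α) * Z / qα β := by
    intro α hα β hβ hab
    obtain ⟨hvol, hμd⟩ := hkey α hα β hβ hab
    have hqβ := (hqα β hβ).1
    have hfinβ := hfin β hβ
    have hfinα := hfin α hα
    have hfinD : volume ({θ | qα β < prior θ * L θ} \ {θ | qα α < prior θ * L θ}) ≠ ⊤ := by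
      intro h
      rw [hvol, h, add_top] at hfinβ
      exact hfinβ rfl
    have h1 := hA (qα β) hqβ ({θ | qα β < prior θ * L θ} \ {θ | qα α < prior θ * L θ})
      ((hmeas _).diff (hmeas _)) Set.diff_subset
    rw [hμd] at h1
    have h2 := ENNReal.toReal_mono ENNReal.ofReal_ne_top h1
    rw [ENNReal.toReal_mul, ENNReal.toReal_ofReal (by positivity),
      ENNReal.toReal_ofReal (by linarith)] at h2
    rw [hvol, ENNReal.toReal_add hfinα hfinD]
    have hZq : 0 < qα β / Z := by positivity
    rw [show (β - α) * Z / qα β = (β - α) / (qα β / Z) by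
      rw [div_div_eq_mul_div]]
    rw [add_sub_cancel_left, le_div_iff₀ hZq]
    linarith [h2]
  refine ⟨hmono, ?_⟩
  -- continuity
  intro α0 hα0
  set b := (α0 + 1) / 2 with hbdef
  have hb : b ∈ Set.Ioo (0:ℝ) 1 := ⟨by simp only [hbdef]; linarith [hα0.1], by
    simp only [hbdef]; linarith [hα0.2]⟩
  have hα0b : α0 < b := by simp only [hbdef]; linarith [hα0.2]
  have hcb : 0 < qα b := (hqα b hb).1
  have hqbα0 : qα b < qα α0 := hanti α0 hα0 b hb hα0b
  rw [Metric.continuousWithinAt_iff]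
  intro ε hε
  refine ⟨min (b - α0) (ε * qα b / Z / 2), lt_min (by linarith) (by positivity), ?_⟩
  intro x hx hdist
  rw [Real.dist_eq] at hdist ⊢
  have hδ1 : |x - α0| < b - α0 := lt_of_lt_of_le hdist (min_le_left _ _)
  have hδ2 : |x - α0| < ε * qα b / Z / 2 := lt_of_lt_of_le hdist (min_le_right _ _)
  rw [abs_sub_lt_iff] at hδ1 hδ2
  have hVle : ∀ u ∈ Set.Ioo (0:ℝ) 1, ∀ v ∈ Set.Ioo (0:ℝ) 1, u < v →
      (volume {θ | qα u < prior θ * L θ}).toReal ≤ (volume {θ | qα v < prior θ * L θ}).toReal :=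
    fun u hu v hv huv => (hmono hu hv huv).le
  rcases lt_trichotomy x α0 with hlt | heq | hgt
  · -- x < α0
    have h1 := hbound x hx α0 hα0 hlt
    have hle := hVle x hx α0 hα0 hlt
    have h2 : (α0 - x) * Z / qα α0 ≤ (α0 - x) * Z / qα b := by
      gcongr
    have h3 : (α0 - x) * Z / qα b < ε / 2 := by
      rw [div_lt_iff₀ hcb]
      calc (α0 - x) * Z < (ε * qα b / Z / 2) * Z :=
            mul_lt_mul_of_pos_right hδ2.2 hZpos
        _ = ε / 2 * qα b := by field_simp
    have habs : |(volume {θ | qα x < prior θ * L θ}).toReal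
        - (volume {θ | qα α0 < prior θ * L θ}).toReal| < ε := by
      rw [abs_sub_lt_iff]
      constructor <;> linarith
    exact habs
  · simp [heq, hε]
  · -- α0 < x
    have hxb : x < b := by linarith [hδ1.1]
    have h1 := hbound α0 hα0 x hx hgt
    have hle := hVle α0 hα0 x hx hgt
    have hqxb : qα b < qα x := hanti x hx b hb hxb
    have h2 : (x - α0) * Z / qα x ≤ (x - α0) * Z / qα b := by
      gcongr
    have h3 : (x - α0) * Z / qα b < ε / 2 := by
      rw [div_lt_iff₀ hcb]
      calc (x - α0) * Z < (ε * qα b / Z / 2) * Z :=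
            mul_lt_mul_of_pos_right hδ2.1 hZpos
        _ = ε / 2 * qα b := by field_simp
    have habs : |(volume {θ | qα x < prior θ * L θ}).toReal
        - (volume {θ | qα α0 < prior θ * L θ}).toReal| < ε := by
      rw [abs_sub_lt_iff]
      constructor <;> linarith
    exact habs
end

section
/- Variance upper bound for convex combinations of truncated harmonic mean estimators: let θ^(1),…,θ^(M) be i.i.d. draws from the posterior with density p = πL/Z, let A_1,…,A_K be measurable sets of finite nonzero volume contained in the posterior support, let ω_1,…,ω_K ≥ 0 with Σ_k ω_k = 1, and set Ẑ_Mix^{-1} = Σ_{k=1}^{K} ω_k (1/M) Σ_{t : θ^(t) ∈ A_k} 1/(V(A_k) π(θ^(t)) L(θ^(t))). Then Var[Ẑ_Mix^{-1}] ≤ (K Z^{-2}/M) Σ_{k=1}^{K} ω_k² ∫_{A_k} (1/V(A_k)²) / p(θ) dθ − Z^{-2}/M. -/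
open MeasureTheory ProbabilityTheory

/-- Variance upper bound for convex combinations of truncated harmonic mean estimators:
for i.i.d. posterior draws `θ⁽¹⁾,…,θ⁽ᴹ⁾`, measurable sets `A₁,…,A_K` of finite nonzero
volume contained in the posterior support, and weights `ω_k ≥ 0` summing to `1`,
`Var[Ẑ_Mix⁻¹] ≤ (K Z⁻²/M) ∑ₖ ωₖ² ∫_{Aₖ} (1/V(Aₖ)²)/p(θ) dθ − Z⁻²/M`,
stated on the extended nonnegative reals with the subtracted term moved to the left. -/
theorem thames_mixture_variance_upper_bound
    {R : ℕ} (prior L : (Fin R → ℝ) → ℝ)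
    (hprior : Measurable prior) (hL : Measurable L)
    (hpriornn : ∀ θ, 0 ≤ prior θ) (hLnn : ∀ θ, 0 ≤ L θ)
    (Z : ℝ) (hZ : Z = ∫ θ, prior θ * L θ) (hZpos : 0 < Z)
    (K : ℕ) (hK : 0 < K)
    (A : Fin K → Set (Fin R → ℝ)) (hA : ∀ k, MeasurableSet (A k))
    (hApos : ∀ k, 0 < volume (A k)) (hAfin : ∀ k, volume (A k) < ⊤)
    (hAsupp : ∀ k, A k ⊆ {θ | 0 < prior θ * L θ})
    (w : Fin K → ℝ) (hw : ∀ k, 0 ≤ w k) (hwsum : ∑ k, w k = 1)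
    {Ω : Type} [MeasureSpace Ω] [IsProbabilityMeasure (ℙ : Measure Ω)]
    (M : ℕ) (hM : 0 < M)
    (X : Fin M → Ω → (Fin R → ℝ))
    (hXmeas : ∀ t, Measurable (X t))
    (hXdist : ∀ t, Measure.map (X t) ℙ =
      volume.withDensity (fun θ => ENNReal.ofReal (prior θ * L θ / Z)))
    (hXindep : iIndepFun (m := fun _ : Fin M => (inferInstance : MeasurableSpace (Fin R → ℝ))) X ℙ) :
    evariance (fun ω => ∑ k : Fin K, w k * ((1 / (M : ℝ)) * ∑ t : Fin M,
        (A k).indicator (fun _ => (1 : ℝ)) (X t ω) /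
          ((volume (A k)).toReal * (prior (X t ω) * L (X t ω))))) ℙ
      + ENNReal.ofReal (Z⁻¹ ^ 2 / M)
    ≤ ENNReal.ofReal ((K : ℝ) * Z⁻¹ ^ 2 / M) *
        ∑ k : Fin K, ENNReal.ofReal (w k ^ 2) *
          ∫⁻ θ in A k, ENNReal.ofReal
            ((1 / (volume (A k)).toReal ^ 2) / (prior θ * L θ / Z)) := by
  classical
  have hZne : Z ≠ 0 := hZpos.ne'
  have hv : ∀ k, 0 < (volume (A k)).toReal :=
    fun k => ENNReal.toReal_pos (hApos k).ne' (hAfin k).ne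
  have hMpos : (0:ℝ) < (M:ℝ) := by exact_mod_cast hM
  -- swap the sums in the estimator
  have hswap : (fun ω => ∑ k : Fin K, w k * ((1 / (M : ℝ)) * ∑ t : Fin M,
        (A k).indicator (fun _ => (1 : ℝ)) (X t ω) /
          ((volume (A k)).toReal * (prior (X t ω) * L (X t ω))))) =
      (fun ω => (1 / (M : ℝ)) * ∑ t : Fin M, ∑ k : Fin K, w k *
        ((A k).indicator (fun _ => (1 : ℝ)) (X t ω) /
          ((volume (A k)).toReal * (prior (X t ω) * L (X t ω))))) := by
    funext ω
    simp only [Finset.mul_sum]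
    rw [Finset.sum_comm]
    exact Finset.sum_congr rfl fun t _ => Finset.sum_congr rfl fun k _ => by ring
  rw [hswap]
  -- abbreviations
  set f : Fin K → (Fin R → ℝ) → ℝ := fun k θ =>
    (A k).indicator (fun _ => (1 : ℝ)) θ /
      ((volume (A k)).toReal * (prior θ * L θ)) with hfdef
  set g : (Fin R → ℝ) → ℝ := fun θ => ∑ k, w k * f k θ with hgdef
  set ν : Measure (Fin R → ℝ) :=
    volume.withDensity (fun θ => ENNReal.ofReal (prior θ * L θ / Z)) with hνdef
  have hXd : ∀ t, Measure.map (X t) ℙ = ν := fun t => hXdist t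
  set I : ENNReal := ∫⁻ θ, ENNReal.ofReal (g θ ^ 2) ∂ν with hIdef
  set B : ENNReal := ENNReal.ofReal (K:ℝ) * ∑ k, ENNReal.ofReal (w k ^ 2 * Z⁻¹ ^ 2) *
      ∫⁻ θ in A k, ENNReal.ofReal
        ((1 / (volume (A k)).toReal ^ 2) / (prior θ * L θ / Z)) with hBdef
  -- basic facts
  have hq : ∀ k, ∀ θ ∈ A k, 0 < prior θ * L θ := fun k θ hθ => hAsupp k hθ
  have hpLnn : ∀ θ, 0 ≤ prior θ * L θ := fun θ => mul_nonneg (hpriornn θ) (hLnn θ)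
  have hdnn : ∀ θ, 0 ≤ prior θ * L θ / Z := fun θ => div_nonneg (hpLnn θ) hZpos.le
  have hfm : ∀ k, Measurable (f k) := fun k =>
    (measurable_const.indicator (hA k)).div (measurable_const.mul (hprior.mul hL))
  have hfnn : ∀ k θ, 0 ≤ f k θ := fun k θ =>
    div_nonneg (Set.indicator_nonneg (fun _ _ => zero_le_one) θ)
      (mul_nonneg (hv k).le (hpLnn θ))
  have hfmem : ∀ k, ∀ θ ∈ A k,
      f k θ = ((volume (A k)).toReal * (prior θ * L θ))⁻¹ := by
    intro k θ hθ
    simp [hfdef, Set.indicator_of_mem hθ, one_div]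
  have hfnot : ∀ k, ∀ θ, θ ∉ A k → f k θ = 0 := by
    intro k θ hθ
    simp [hfdef, Set.indicator_of_notMem hθ]
  have hgm : Measurable g := Finset.measurable_sum _ fun k _ => (hfm k).const_mul (w k)
  have hgnn : ∀ θ, 0 ≤ g θ := fun θ =>
    Finset.sum_nonneg fun k _ => mul_nonneg (hw k) (hfnn k θ)
  have hdm : Measurable (fun θ => ENNReal.ofReal (prior θ * L θ / Z)) :=
    ((hprior.mul hL).div_const Z).ennreal_ofReal
  -- first moment
  have hptwise1 : ∀ θ, ENNReal.ofReal (prior θ * L θ / Z) * ENNReal.ofReal (g θ) =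
      ∑ k, (A k).indicator
        (fun _ => ENNReal.ofReal (w k / ((volume (A k)).toReal * Z))) θ := by
    intro θ
    rw [← ENNReal.ofReal_mul (hdnn θ)]
    have h2 : (prior θ * L θ / Z) * g θ =
        ∑ k, (A k).indicator (fun _ => w k / ((volume (A k)).toReal * Z)) θ := by
      simp only [hgdef, Finset.mul_sum]
      refine Finset.sum_congr rfl fun k _ => ?_
      by_cases hθ : θ ∈ A k
      · have hqθ := (hq k θ hθ).ne'
        have hvk := (hv k).ne'
        rw [Set.indicator_of_mem hθ, hfmem k θ hθ]
        have := left_ne_zero_of_mul hqθ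
        have := right_ne_zero_of_mul hqθ
        field_simp
      · rw [Set.indicator_of_notMem hθ, hfnot k θ hθ]; ring
    rw [h2, ENNReal.ofReal_sum_of_nonneg (fun k _ =>
      Set.indicator_nonneg (fun _ _ => div_nonneg (hw k)
        (mul_nonneg (hv k).le hZpos.le)) θ)]
    refine Finset.sum_congr rfl fun k _ => ?_
    by_cases hθ : θ ∈ A k
    · simp [Set.indicator_of_mem hθ]
    · simp [Set.indicator_of_notMem hθ]
  have Eg : ∫⁻ θ, ENNReal.ofReal (g θ) ∂ν = ENNReal.ofReal Z⁻¹ := by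
    rw [hνdef, lintegral_withDensity_eq_lintegral_mul _ hdm hgm.ennreal_ofReal]
    calc ∫⁻ θ, ((fun θ => ENNReal.ofReal (prior θ * L θ / Z)) *
          fun θ => ENNReal.ofReal (g θ)) θ
        = ∫⁻ θ, ∑ k, (A k).indicator
            (fun _ => ENNReal.ofReal (w k / ((volume (A k)).toReal * Z))) θ :=
          lintegral_congr fun θ => by rw [Pi.mul_apply]; exact hptwise1 θ
      _ = ∑ k, ENNReal.ofReal (w k / ((volume (A k)).toReal * Z)) * volume (A k) := by
          rw [lintegral_finset_sum _ fun k _ => measurable_const.indicator (hA k)]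
          exact Finset.sum_congr rfl fun k _ => lintegral_indicator_const (hA k) _
      _ = ∑ k, ENNReal.ofReal (w k * Z⁻¹) := by
          refine Finset.sum_congr rfl fun k _ => ?_
          nth_rewrite 2 [← ENNReal.ofReal_toReal (hAfin k).ne]
          rw [← ENNReal.ofReal_mul (div_nonneg (hw k) (mul_nonneg (hv k).le hZpos.le))]
          congr 1
          have hvk := (hv k).ne'
          field_simp
      _ = ENNReal.ofReal Z⁻¹ := by
          rw [← ENNReal.ofReal_sum_of_nonneg fun k _ =>
            mul_nonneg (hw k) (inv_nonneg.2 hZpos.le), ← Finset.sum_mul, hwsum, one_mul]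
  -- second moment per component
  have hT2 : ∀ k, (∫⁻ θ, ENNReal.ofReal ((w k * f k θ) ^ 2) ∂ν)
      = ENNReal.ofReal (w k ^ 2 * Z⁻¹ ^ 2) *
        ∫⁻ θ in A k, ENNReal.ofReal
          ((1 / (volume (A k)).toReal ^ 2) / (prior θ * L θ / Z)) := by
    intro k
    rw [hνdef, lintegral_withDensity_eq_lintegral_mul _ hdm
      (((hfm k).const_mul (w k)).pow_const 2).ennreal_ofReal]
    have hpt : ∀ θ, ((fun θ => ENNReal.ofReal (prior θ * L θ / Z)) *
        fun θ => ENNReal.ofReal ((w k * f k θ) ^ 2)) θ =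
        (A k).indicator (fun θ => ENNReal.ofReal (w k ^ 2 * Z⁻¹ ^ 2) *
          ENNReal.ofReal
            ((1 / (volume (A k)).toReal ^ 2) / (prior θ * L θ / Z))) θ := by
      intro θ
      rw [Pi.mul_apply]
      by_cases hθ : θ ∈ A k
      · have hqθ := (hq k θ hθ).ne'
        have hvk := (hv k).ne'
        rw [Set.indicator_of_mem hθ,
          ← ENNReal.ofReal_mul (hdnn θ),
          ← ENNReal.ofReal_mul (mul_nonneg (sq_nonneg _) (sq_nonneg _))]
        congr 1
        rw [hfmem k θ hθ]
        field_simp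
      · rw [Set.indicator_of_notMem hθ, hfnot k θ hθ]
        simp
    rw [lintegral_congr hpt, lintegral_indicator (hA k),
      lintegral_const_mul' _ _ ENNReal.ofReal_ne_top]
  -- pointwise Cauchy–Schwarz
  have hCS : ∀ θ, g θ ^ 2 ≤ (K:ℝ) * ∑ k, (w k * f k θ) ^ 2 := by
    intro θ
    have h := sq_sum_le_card_mul_sum_sq
      (s := (Finset.univ : Finset (Fin K))) (f := fun k => w k * f k θ)
    simpa [hgdef] using h
  -- second moment bound
  have hIB : I ≤ B := by
    calc I ≤ ∫⁻ θ, ENNReal.ofReal ((K:ℝ) * ∑ k, (w k * f k θ) ^ 2) ∂ν :=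
          lintegral_mono fun θ => ENNReal.ofReal_le_ofReal (hCS θ)
      _ = ENNReal.ofReal (K:ℝ) *
            ∫⁻ θ, ENNReal.ofReal (∑ k, (w k * f k θ) ^ 2) ∂ν := by
          rw [← lintegral_const_mul' _ _ ENNReal.ofReal_ne_top]
          exact lintegral_congr fun θ => ENNReal.ofReal_mul (Nat.cast_nonneg K)
      _ = ENNReal.ofReal (K:ℝ) *
            ∑ k, ∫⁻ θ, ENNReal.ofReal ((w k * f k θ) ^ 2) ∂ν := by
          congr 1
          rw [← lintegral_finset_sum _ fun k _ =>
            (((hfm k).const_mul (w k)).pow_const 2).ennreal_ofReal]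
          exact lintegral_congr fun θ =>
            ENNReal.ofReal_sum_of_nonneg fun k _ => sq_nonneg _
      _ = B := by
          rw [hBdef]
          congr 1
          exact Finset.sum_congr rfl fun k _ => hT2 k
  -- rewrite the RHS of the goal
  have hRHSeq : (ENNReal.ofReal ((K : ℝ) * Z⁻¹ ^ 2 / M) *
        ∑ k : Fin K, ENNReal.ofReal (w k ^ 2) *
          ∫⁻ θ in A k, ENNReal.ofReal
            ((1 / (volume (A k)).toReal ^ 2) / (prior θ * L θ / Z)))
      = ENNReal.ofReal (1 / (M:ℝ)) * B := by
    rw [hBdef]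
    rw [show (K:ℝ) * Z⁻¹ ^ 2 / M = (1 / (M:ℝ)) * ((K:ℝ) * Z⁻¹ ^ 2) by ring]
    rw [ENNReal.ofReal_mul (by positivity), ENNReal.ofReal_mul (Nat.cast_nonneg K)]
    have hwz : ∀ k : Fin K, ENNReal.ofReal (w k ^ 2 * Z⁻¹ ^ 2) =
        ENNReal.ofReal (w k ^ 2) * ENNReal.ofReal (Z⁻¹ ^ 2) :=
      fun k => ENNReal.ofReal_mul (sq_nonneg _)
    simp only [hwz]
    simp only [Finset.mul_sum]
    refine Finset.sum_congr rfl fun k _ => by ring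
  rw [hRHSeq]
  -- case on whether the bound is infinite
  rcases eq_or_ne B ⊤ with hB | hB
  · rw [hB, ENNReal.mul_top (ENNReal.ofReal_pos.2 (by positivity)).ne']
    exact le_top
  -- finite case
  have hIlt : I < ⊤ := lt_of_le_of_lt hIB hB.lt_top
  have hgL2 : MemLp g 2 ν := by
    rw [memLp_two_iff_integrable_sq hgm.aestronglyMeasurable]
    refine ⟨(hgm.pow_const 2).aestronglyMeasurable, ?_⟩
    rw [hasFiniteIntegral_iff_ofReal (Filter.Eventually.of_forall fun θ => sq_nonneg _)]
    exact hIlt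
  have hYmem : ∀ t, MemLp (fun ω => g (X t ω)) 2 ℙ := by
    intro t
    have h1 : MemLp g 2 (Measure.map (X t) ℙ) := by rw [hXd t]; exact hgL2
    exact (memLp_map_measure_iff hgm.aestronglyMeasurable (hXmeas t).aemeasurable).1 h1
  have hEY : ∀ t, ∫ ω, g (X t ω) ∂ℙ = Z⁻¹ := by
    intro t
    have h1 := integral_map (μ := ℙ) (φ := X t) (hXmeas t).aemeasurable
      (f := g) hgm.aestronglyMeasurable
    rw [hXd t] at h1
    rw [← h1, integral_eq_lintegral_of_nonneg_ae
      (Filter.Eventually.of_forall hgnn) hgm.aestronglyMeasurable, Eg,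
      ENNReal.toReal_ofReal (inv_nonneg.2 hZpos.le)]
  have hEY2 : ∀ t, ∫ ω, g (X t ω) ^ 2 ∂ℙ = I.toReal := by
    intro t
    have h1 := integral_map (μ := ℙ) (φ := X t) (hXmeas t).aemeasurable
      (f := fun θ => g θ ^ 2) (hgm.pow_const 2).aestronglyMeasurable
    rw [hXd t] at h1
    rw [← h1, integral_eq_lintegral_of_nonneg_ae
      (Filter.Eventually.of_forall fun θ => sq_nonneg (g θ))
      (hgm.pow_const 2).aestronglyMeasurable]
  have hvarY : ∀ t, variance (fun ω => g (X t ω)) ℙ = I.toReal - Z⁻¹ ^ 2 := by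
    intro t
    rw [variance_eq_sub (hYmem t)]
    simp only [Pi.pow_apply]
    rw [hEY2 t, hEY t]
  have hYindep := hXindep.comp (fun _ => g) (fun _ => hgm)
  have hvarsum : variance (∑ t, fun ω => g (X t ω)) ℙ = (M:ℝ) * (I.toReal - Z⁻¹ ^ 2) := by
    rw [IndepFun.variance_sum (fun t _ => hYmem t)
      (fun i _ j _ hij => hYindep.indepFun hij)]
    simp only [hvarY]
    rw [Finset.sum_const, Finset.card_univ, Fintype.card_fin, nsmul_eq_mul]
  have hsum_apply : (fun ω => (1 / (M:ℝ)) * ∑ t, ∑ k : Fin K, w k *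
        ((A k).indicator (fun _ => (1 : ℝ)) (X t ω) /
          ((volume (A k)).toReal * (prior (X t ω) * L (X t ω))))) =
      (fun ω => (1 / (M:ℝ)) * (∑ t, fun ω' => g (X t ω')) ω) := by
    funext ω
    rw [Finset.sum_apply]
  rw [hsum_apply]
  have hSmem : MemLp (fun ω => (1 / (M:ℝ)) * (∑ t, fun ω' => g (X t ω')) ω) 2 ℙ :=
    (memLp_finset_sum' _ fun t _ => hYmem t).const_mul _
  have hvarS : variance (fun ω => (1 / (M:ℝ)) * (∑ t, fun ω' => g (X t ω')) ω) ℙ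
      = (1 / (M:ℝ)) * (I.toReal - Z⁻¹ ^ 2) := by
    rw [variance_const_mul, hvarsum]
    field_simp
  rw [← hSmem.ofReal_variance_eq, hvarS]
  have hvarnn : 0 ≤ (1 / (M:ℝ)) * (I.toReal - Z⁻¹ ^ 2) := by
    rw [← hvarS]; exact variance_nonneg _ _
  rw [← ENNReal.ofReal_add hvarnn (by positivity),
    show (1 / (M:ℝ)) * (I.toReal - Z⁻¹ ^ 2) + Z⁻¹ ^ 2 / M
      = (1 / (M:ℝ)) * I.toReal by ring,
    ENNReal.ofReal_mul (by positivity), ENNReal.ofReal_toReal hIlt.ne]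
  exact mul_le_mul_right hIB _
end

section
/- Gaussian-mixture variance upper bound (step of Theorem 3): suppose additionally that the posterior density is a Gaussian mixture, p(θ) = Σ_{k=1}^{K} a_k MVN_R(θ; m_k, S_k) with a_k > 0 summing to 1 and S_k positive definite. Then for the convex combination Ẑ_Mix^{-1} of truncated harmonic mean estimators with weights ω_k and sets A_k (each measurable with finite nonzero volume, contained in the posterior support), Var[Ẑ_Mix^{-1}] ≤ (K Z^{-2}/M) Σ_{k=1}^{K} (ω_k²/a_k) ∫_{A_k} (1/V(A_k)²) / MVN_R(θ; m_k, S_k) dθ − Z^{-2}/M, where MVN_R(θ; m, S) denotes the R-dimensional Gaussian density with mean m and covariance S evaluated at θ. -/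
open MeasureTheory ProbabilityTheory Matrix

/-- The `R`-dimensional Gaussian density with mean `m` and covariance `S`:
`MVN_R(θ; m, S) = (2π)^{−R/2} det(S)^{−1/2} exp(−(θ−m)ᵀS⁻¹(θ−m)/2)`. -/
noncomputable def mvnPdf {R : ℕ} (m : Fin R → ℝ) (S : Matrix (Fin R) (Fin R) ℝ)
    (θ : Fin R → ℝ) : ℝ :=
  (2 * Real.pi) ^ (-(R : ℝ) / 2) * S.det ^ (-(1 : ℝ) / 2) *
    Real.exp (-((θ - m) ⬝ᵥ (S⁻¹ *ᵥ (θ - m))) / 2)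

lemma mvnPdf_pos {R : ℕ} (m : Fin R → ℝ) {S : Matrix (Fin R) (Fin R) ℝ}
    (hS : S.PosDef) (θ : Fin R → ℝ) : 0 < mvnPdf m S θ := by
  have h : 0 < S.det := hS.det_pos
  unfold mvnPdf
  positivity

lemma measurable_mvnPdf {R : ℕ} (m : Fin R → ℝ) (S : Matrix (Fin R) (Fin R) ℝ) :
    Measurable (mvnPdf m S) := by
  unfold mvnPdf
  simp only [dotProduct, mulVec, dotProduct]
  fun_prop

lemma aux_var_bound {α : Type*} [MeasurableSpace α] {ν : Measure α}
    {Ω : Type} [MeasureSpace Ω] [IsProbabilityMeasure (ℙ : Measure Ω)]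
    {M : ℕ} (hM : 0 < M) {X : Fin M → Ω → α} (hXmeas : ∀ t, Measurable (X t))
    (hXdist : ∀ t, Measure.map (X t) ℙ = ν)
    (hXindep : iIndepFun X ℙ)
    {Y : α → ℝ} (hY : Measurable Y) :
    evariance (fun ω => (M:ℝ)⁻¹ * ∑ t, Y (X t ω)) ℙ
        + ENNReal.ofReal ((∫ x, Y x ∂ν) ^ 2 / M)
      ≤ ENNReal.ofReal (M:ℝ)⁻¹ * ∫⁻ x, ENNReal.ofReal (Y x ^ 2) ∂ν := by
  have hMne : (M:ℝ) ≠ 0 := Nat.cast_ne_zero.2 hM.ne'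
  by_cases hI : ∫⁻ x, ENNReal.ofReal (Y x ^ 2) ∂ν = ⊤
  · rw [hI, ENNReal.mul_top (by simp [ENNReal.ofReal_eq_zero]; positivity)]
    exact le_top
  · have hYsm : AEStronglyMeasurable Y ν := hY.aestronglyMeasurable
    have hint2 : Integrable (fun x => Y x ^ 2) ν := by
      refine ⟨(hY.pow_const 2).aestronglyMeasurable, ?_⟩
      rw [hasFiniteIntegral_iff_ofReal (Filter.Eventually.of_forall fun x => sq_nonneg _)]
      exact lt_top_iff_ne_top.2 hI
    have hmem : MemLp Y 2 ν := (memLp_two_iff_integrable_sq hYsm).2 hint2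
    have hmemt : ∀ t, MemLp (fun ω => Y (X t ω)) 2 ℙ := by
      intro t
      have := (memLp_map_measure_iff (f := X t) (μ := ℙ) (g := Y) (p := 2)
        (by rw [hXdist t]; exact hYsm) (hXmeas t).aemeasurable).1 (by rw [hXdist t]; exact hmem)
      exact this
    have hmean : ∀ t, ∫ ω, Y (X t ω) ∂ℙ = ∫ x, Y x ∂ν := by
      intro t
      rw [← hXdist t]
      exact (integral_map (hXmeas t).aemeasurable (by rw [hXdist t]; exact hYsm)).symm
    have hsq : ∀ t, ∫ ω, Y (X t ω) ^ 2 ∂ℙ = ∫ x, Y x ^ 2 ∂ν := by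
      intro t
      rw [← hXdist t]
      exact (integral_map (hXmeas t).aemeasurable
        (by rw [hXdist t]; exact (hY.pow_const 2).aestronglyMeasurable)).symm
    set Q := ∫ x, Y x ^ 2 ∂ν with hQ
    set m₀ := ∫ x, Y x ∂ν with hm₀
    have hvar : ∀ t, variance (fun ω => Y (X t ω)) ℙ = Q - m₀ ^ 2 := by
      intro t
      rw [variance_eq_sub (hmemt t)]
      simp only [Pi.pow_apply]
      rw [hsq t, hmean t]
    have hpair : Set.Pairwise ↑(Finset.univ : Finset (Fin M))
        (fun i j => IndepFun (fun ω => Y (X i ω)) (fun ω => Y (X j ω)) ℙ) :=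
      fun i _ j _ hij => (hXindep.indepFun hij).comp hY hY
    have hvarsum : variance (∑ t, fun ω => Y (X t ω)) ℙ = M * (Q - m₀ ^ 2) := by
      rw [IndepFun.variance_sum (fun i _ => hmemt i) hpair]
      simp [hvar, Finset.card_univ, mul_comm]
      ring
    have hFeq : (fun ω => (M:ℝ)⁻¹ * ∑ t, Y (X t ω))
        = (M:ℝ)⁻¹ • ∑ t, fun ω => Y (X t ω) := by
      funext ω
      simp [Finset.sum_apply]
    have hvarF : variance (fun ω => (M:ℝ)⁻¹ * ∑ t, Y (X t ω)) ℙ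
        = ((M:ℝ)⁻¹) ^ 2 * (M * (Q - m₀ ^ 2)) := by
      rw [hFeq, variance_smul, hvarsum]
    have hmemF : MemLp (fun ω => (M:ℝ)⁻¹ * ∑ t, Y (X t ω)) 2 ℙ := by
      rw [hFeq]
      exact (memLp_finset_sum' _ fun t _ => hmemt t).const_smul _
    have hQm : m₀ ^ 2 ≤ Q := by
      have h0 := variance_nonneg (fun ω => Y (X ⟨0, hM⟩ ω)) ℙ
      rw [hvar ⟨0, hM⟩] at h0
      linarith
    have hQofReal : ENNReal.ofReal Q = ∫⁻ x, ENNReal.ofReal (Y x ^ 2) ∂ν :=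
      ofReal_integral_eq_lintegral_ofReal hint2 (Filter.Eventually.of_forall fun x => sq_nonneg _)
    rw [← hmemF.ofReal_variance_eq, hvarF, ← hQofReal,
      ← ENNReal.ofReal_mul (by positivity : (0:ℝ) ≤ (M:ℝ)⁻¹),
      ← ENNReal.ofReal_add (mul_nonneg (by positivity) (mul_nonneg (by positivity) (by linarith))) (by positivity)]
    apply ENNReal.ofReal_le_ofReal
    apply le_of_eq
    field_simp
    ring

/-- Gaussian-mixture variance upper bound (step of Theorem 3): if the posterior density
is a Gaussian mixture `p(θ) = ∑ₖ aₖ MVN_R(θ; mₖ, Sₖ)` with `aₖ > 0` summing to `1` and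
`Sₖ` positive definite, then for the convex combination `Ẑ_Mix⁻¹` of truncated harmonic
mean estimators with weights `ωₖ` and sets `Aₖ`,
`Var[Ẑ_Mix⁻¹] ≤ (K Z⁻²/M) ∑ₖ (ωₖ²/aₖ) ∫_{Aₖ} (1/V(Aₖ)²)/MVN_R(θ; mₖ, Sₖ) dθ − Z⁻²/M`,
stated on the extended nonnegative reals with the subtracted term moved to the left. -/
theorem thames_mixture_gaussian_variance_upper_bound
    {R : ℕ} (prior L : (Fin R → ℝ) → ℝ)
    (hprior : Measurable prior) (hL : Measurable L)
    (hpriornn : ∀ θ, 0 ≤ prior θ) (hLnn : ∀ θ, 0 ≤ L θ)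
    (Z : ℝ) (hZ : Z = ∫ θ, prior θ * L θ) (hZpos : 0 < Z)
    (K : ℕ) (hK : 0 < K)
    (a : Fin K → ℝ) (ha : ∀ k, 0 < a k) (hasum : ∑ k, a k = 1)
    (m : Fin K → Fin R → ℝ) (S : Fin K → Matrix (Fin R) (Fin R) ℝ)
    (hS : ∀ k, (S k).PosDef)
    (hmix : ∀ θ, prior θ * L θ / Z = ∑ k, a k * mvnPdf (m k) (S k) θ)
    (A : Fin K → Set (Fin R → ℝ)) (hA : ∀ k, MeasurableSet (A k))
    (hApos : ∀ k, 0 < volume (A k)) (hAfin : ∀ k, volume (A k) < ⊤)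
    (hAsupp : ∀ k, A k ⊆ {θ | 0 < prior θ * L θ})
    (w : Fin K → ℝ) (hw : ∀ k, 0 ≤ w k) (hwsum : ∑ k, w k = 1)
    {Ω : Type} [MeasureSpace Ω] [IsProbabilityMeasure (ℙ : Measure Ω)]
    (M : ℕ) (hM : 0 < M)
    (X : Fin M → Ω → (Fin R → ℝ))
    (hXmeas : ∀ t, Measurable (X t))
    (hXdist : ∀ t, Measure.map (X t) ℙ =
      volume.withDensity (fun θ => ENNReal.ofReal (prior θ * L θ / Z)))
    (hXindep : iIndepFun X ℙ) :
    evariance (fun ω => ∑ k : Fin K, w k * ((1 / (M : ℝ)) * ∑ t : Fin M,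
        (A k).indicator (fun _ => (1 : ℝ)) (X t ω) /
          ((volume (A k)).toReal * (prior (X t ω) * L (X t ω))))) ℙ
      + ENNReal.ofReal (Z⁻¹ ^ 2 / M)
    ≤ ENNReal.ofReal ((K : ℝ) * Z⁻¹ ^ 2 / M) *
        ∑ k : Fin K, ENNReal.ofReal (w k ^ 2 / a k) *
          ∫⁻ θ in A k, ENNReal.ofReal
            ((1 / (volume (A k)).toReal ^ 2) / mvnPdf (m k) (S k) θ) := by
  have hZne : Z ≠ 0 := ne_of_gt hZpos
  have hπL : Measurable (fun θ => prior θ * L θ) := hprior.mul hL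
  have hVpos : ∀ k, 0 < (volume (A k)).toReal :=
    fun k => ENNReal.toReal_pos (hApos k).ne' (hAfin k).ne
  set Y : (Fin R → ℝ) → ℝ := fun θ => ∑ k, w k * ((A k).indicator (fun _ => (1:ℝ)) θ /
      ((volume (A k)).toReal * (prior θ * L θ))) with hYdef
  have hYmeas : Measurable Y :=
    Finset.measurable_sum _ fun k _ => measurable_const.mul
      ((measurable_const.indicator (hA k)).div (measurable_const.mul hπL))
  set ν : Measure (Fin R → ℝ) :=
    volume.withDensity (fun θ => ENNReal.ofReal (prior θ * L θ / Z)) with hν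
  -- the estimator as empirical mean of Y
  have hFeq : (fun ω => ∑ k : Fin K, w k * ((1 / (M : ℝ)) * ∑ t : Fin M,
        (A k).indicator (fun _ => (1 : ℝ)) (X t ω) /
          ((volume (A k)).toReal * (prior (X t ω) * L (X t ω)))))
      = fun ω => (M:ℝ)⁻¹ * ∑ t, Y (X t ω) := by
    funext ω
    simp only [hYdef, Finset.mul_sum, one_div]
    rw [Finset.sum_comm]
    refine Finset.sum_congr rfl fun t _ => Finset.sum_congr rfl fun k _ => by ring
  have hPLint : Integrable (fun θ => prior θ * L θ) := by
    by_contra h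
    rw [integral_undef h] at hZ
    exact hZpos.ne' hZ
  -- mean of Y under ν
  have hmean : ∫ x, Y x ∂ν = Z⁻¹ := by
    have hsmul : ∫ x, Y x ∂ν = ∫ θ, ((prior θ * L θ / Z).toNNReal : ℝ) • Y θ := by
      rw [hν]
      exact integral_withDensity_eq_integral_smul ((hπL.div_const Z).real_toNNReal) Y
    rw [hsmul]
    have hpt : ∀ θ, ((prior θ * L θ / Z).toNNReal : ℝ) • Y θ
        = ∑ k, (A k).indicator (fun _ => w k / (Z * (volume (A k)).toReal)) θ := by
      intro θ
      rw [smul_eq_mul, Real.coe_toNNReal _ (div_nonneg (mul_nonneg (hpriornn θ) (hLnn θ)) hZpos.le)]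
      rw [hYdef, Finset.mul_sum]
      refine Finset.sum_congr rfl fun k _ => ?_
      by_cases hθ : θ ∈ A k
      · have hpos : 0 < prior θ * L θ := hAsupp k hθ
        rw [Set.indicator_of_mem hθ, Set.indicator_of_mem hθ]
        have hv := (hVpos k).ne'
        field_simp
        linear_combination (w k) * mul_inv_cancel₀ hpos.ne'
      · rw [Set.indicator_of_notMem hθ, Set.indicator_of_notMem hθ]
        simp
    rw [integral_congr_ae (Filter.Eventually.of_forall hpt),
      integral_finset_sum _ (fun k _ => (integrable_indicator_iff (hA k)).2
        (integrableOn_const (hAfin k).ne))]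
    have hterm : ∀ k ∈ Finset.univ, (∫ θ, (A k).indicator
        (fun _ => w k / (Z * (volume (A k)).toReal)) θ) = w k / Z := by
      intro k _
      rw [integral_indicator_const _ (hA k), smul_eq_mul]
      have hv := (hVpos k).ne'
      field_simp
      rw [measureReal_def]
      ring
    rw [Finset.sum_congr rfl hterm, ← Finset.sum_div, hwsum, one_div]
  -- second moment bound
  have hIle : ∫⁻ x, ENNReal.ofReal (Y x ^ 2) ∂ν ≤
      ∑ k, ENNReal.ofReal ((K:ℝ) * (w k ^ 2 / a k) * Z⁻¹ ^ 2) *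
        ∫⁻ θ in A k, ENNReal.ofReal
          ((1 / (volume (A k)).toReal ^ 2) / mvnPdf (m k) (S k) θ) := by
    have hmvnpos : ∀ k θ, 0 < mvnPdf (m k) (S k) θ := fun k θ => mvnPdf_pos _ (hS k) θ
    have hterm_nonneg : ∀ k θ, 0 ≤ (A k).indicator
        (fun θ' => (K:ℝ) * (w k ^ 2 / a k) * Z⁻¹ ^ 2 *
          ((1 / (volume (A k)).toReal ^ 2) / mvnPdf (m k) (S k) θ')) θ := by
      intro k θ
      refine Set.indicator_nonneg (fun θ' _ => ?_) θ
      have h1 := ha k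
      have h2 := hmvnpos k θ'
      positivity
    have hreal : ∀ θ, (prior θ * L θ / Z) * Y θ ^ 2 ≤ ∑ k, (A k).indicator
        (fun θ' => (K:ℝ) * (w k ^ 2 / a k) * Z⁻¹ ^ 2 *
          ((1 / (volume (A k)).toReal ^ 2) / mvnPdf (m k) (S k) θ')) θ := by
      intro θ
      rcases eq_or_lt_of_le (mul_nonneg (hpriornn θ) (hLnn θ)) with h0 | hpos
      · rw [← h0, zero_div, zero_mul]
        exact Finset.sum_nonneg fun k _ => hterm_nonneg k θ
      · have hCS : Y θ ^ 2 ≤ (K:ℝ) * ∑ k, (w k * ((A k).indicator (fun _ => (1:ℝ)) θ /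
            ((volume (A k)).toReal * (prior θ * L θ)))) ^ 2 := by
          have h := sq_sum_le_card_mul_sum_sq (s := (Finset.univ : Finset (Fin K)))
            (f := fun k => w k * ((A k).indicator (fun _ => (1:ℝ)) θ /
              ((volume (A k)).toReal * (prior θ * L θ))))
          simpa [hYdef] using h
        calc (prior θ * L θ / Z) * Y θ ^ 2
            ≤ (prior θ * L θ / Z) * ((K:ℝ) * ∑ k, (w k * ((A k).indicator (fun _ => (1:ℝ)) θ /
                ((volume (A k)).toReal * (prior θ * L θ)))) ^ 2) :=
              mul_le_mul_of_nonneg_left hCS (by positivity)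
          _ = ∑ k, (prior θ * L θ / Z) * ((K:ℝ) * (w k * ((A k).indicator (fun _ => (1:ℝ)) θ /
                ((volume (A k)).toReal * (prior θ * L θ)))) ^ 2) := by
              simp only [Finset.mul_sum]
          _ ≤ ∑ k, (A k).indicator
              (fun θ' => (K:ℝ) * (w k ^ 2 / a k) * Z⁻¹ ^ 2 *
                ((1 / (volume (A k)).toReal ^ 2) / mvnPdf (m k) (S k) θ')) θ := by
              refine Finset.sum_le_sum fun k _ => ?_
              by_cases hθ : θ ∈ A k
              · rw [Set.indicator_of_mem hθ, Set.indicator_of_mem hθ]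
                have hG := hmvnpos k θ
                have hak := ha k
                have hV := hVpos k
                have hkey : Z * (a k * mvnPdf (m k) (S k) θ) ≤ prior θ * L θ := by
                  have h1 : a k * mvnPdf (m k) (S k) θ ≤ prior θ * L θ / Z := by
                    rw [hmix θ]
                    exact Finset.single_le_sum
                      (fun j _ => mul_nonneg (ha j).le (hmvnpos j θ).le) (Finset.mem_univ k)
                  calc Z * (a k * mvnPdf (m k) (S k) θ) ≤ Z * (prior θ * L θ / Z) :=
                        mul_le_mul_of_nonneg_left h1 hZpos.le
                    _ = prior θ * L θ := by field_simp
                have e1 : (prior θ * L θ / Z) * ((K:ℝ) * (w k * (1 /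
                      ((volume (A k)).toReal * (prior θ * L θ)))) ^ 2)
                    = ((K:ℝ) * w k ^ 2 / ((volume (A k)).toReal ^ 2 * Z)) *
                      (1 / (prior θ * L θ)) := by
                  field_simp
                have e2 : (K:ℝ) * (w k ^ 2 / a k) * Z⁻¹ ^ 2 *
                      ((1 / (volume (A k)).toReal ^ 2) / mvnPdf (m k) (S k) θ)
                    = ((K:ℝ) * w k ^ 2 / ((volume (A k)).toReal ^ 2 * Z)) *
                      (1 / (Z * (a k * mvnPdf (m k) (S k) θ))) := by
                  field_simp
                rw [e1, e2]
                exact mul_le_mul_of_nonneg_left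
                  (one_div_le_one_div_of_le (by positivity) hkey) (by positivity)
              · rw [Set.indicator_of_notMem hθ, Set.indicator_of_notMem hθ]
                simp
    have hpt : ∀ θ, ENNReal.ofReal (prior θ * L θ / Z) * ENNReal.ofReal (Y θ ^ 2)
        ≤ ∑ k, (A k).indicator (fun θ' => ENNReal.ofReal ((K:ℝ) * (w k ^ 2 / a k) * Z⁻¹ ^ 2 *
            ((1 / (volume (A k)).toReal ^ 2) / mvnPdf (m k) (S k) θ'))) θ := by
      intro θ
      rw [← ENNReal.ofReal_mul (div_nonneg (mul_nonneg (hpriornn θ) (hLnn θ)) hZpos.le)]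
      refine le_trans (ENNReal.ofReal_le_ofReal (hreal θ)) ?_
      rw [ENNReal.ofReal_sum_of_nonneg (fun k _ => hterm_nonneg k θ)]
      refine le_of_eq (Finset.sum_congr rfl fun k _ => ?_)
      by_cases hθ : θ ∈ A k
      · rw [Set.indicator_of_mem hθ, Set.indicator_of_mem hθ]
      · rw [Set.indicator_of_notMem hθ, Set.indicator_of_notMem hθ, ENNReal.ofReal_zero]
    have hmeasg : ∀ k, Measurable (fun θ' => ENNReal.ofReal ((K:ℝ) * (w k ^ 2 / a k) * Z⁻¹ ^ 2 *
        ((1 / (volume (A k)).toReal ^ 2) / mvnPdf (m k) (S k) θ'))) :=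
      fun k => (measurable_const.mul
        (measurable_const.div (measurable_mvnPdf _ _))).ennreal_ofReal
    rw [hν, lintegral_withDensity_eq_lintegral_mul _
      ((hπL.div_const Z).ennreal_ofReal) ((hYmeas.pow_const 2).ennreal_ofReal)]
    calc ∫⁻ θ, ((fun θ => ENNReal.ofReal (prior θ * L θ / Z)) *
            fun θ => ENNReal.ofReal (Y θ ^ 2)) θ
        ≤ ∫⁻ θ, ∑ k, (A k).indicator
            (fun θ' => ENNReal.ofReal ((K:ℝ) * (w k ^ 2 / a k) * Z⁻¹ ^ 2 *
              ((1 / (volume (A k)).toReal ^ 2) / mvnPdf (m k) (S k) θ'))) θ :=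
          lintegral_mono fun θ => hpt θ
      _ = ∑ k, ∫⁻ θ, (A k).indicator
            (fun θ' => ENNReal.ofReal ((K:ℝ) * (w k ^ 2 / a k) * Z⁻¹ ^ 2 *
              ((1 / (volume (A k)).toReal ^ 2) / mvnPdf (m k) (S k) θ'))) θ :=
          lintegral_finset_sum _ fun k _ => (hmeasg k).indicator (hA k)
      _ = ∑ k, ENNReal.ofReal ((K:ℝ) * (w k ^ 2 / a k) * Z⁻¹ ^ 2) *
            ∫⁻ θ in A k, ENNReal.ofReal
              ((1 / (volume (A k)).toReal ^ 2) / mvnPdf (m k) (S k) θ) := by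
          refine Finset.sum_congr rfl fun k _ => ?_
          rw [lintegral_indicator (hA k), ← lintegral_const_mul' _ _ ENNReal.ofReal_ne_top]
          refine lintegral_congr fun θ => ?_
          rw [← ENNReal.ofReal_mul (by have := ha k; positivity)]
  rw [hFeq]
  calc evariance (fun ω => (M:ℝ)⁻¹ * ∑ t, Y (X t ω)) ℙ + ENNReal.ofReal (Z⁻¹ ^ 2 / M)
      ≤ ENNReal.ofReal (M:ℝ)⁻¹ * ∫⁻ x, ENNReal.ofReal (Y x ^ 2) ∂ν := by
        have := aux_var_bound hM hXmeas (fun t => hXdist t) hXindep hYmeas (ν := ν)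
        rwa [hmean] at this
    _ ≤ ENNReal.ofReal (M:ℝ)⁻¹ * ∑ k, ENNReal.ofReal ((K:ℝ) * (w k ^ 2 / a k) * Z⁻¹ ^ 2) *
          ∫⁻ θ in A k, ENNReal.ofReal
            ((1 / (volume (A k)).toReal ^ 2) / mvnPdf (m k) (S k) θ) :=
        mul_le_mul_right hIle _
    _ = ENNReal.ofReal ((K : ℝ) * Z⁻¹ ^ 2 / M) *
        ∑ k : Fin K, ENNReal.ofReal (w k ^ 2 / a k) *
          ∫⁻ θ in A k, ENNReal.ofReal
            ((1 / (volume (A k)).toReal ^ 2) / mvnPdf (m k) (S k) θ) := by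
        rw [Finset.mul_sum, Finset.mul_sum]
        refine Finset.sum_congr rfl fun k _ => ?_
        rw [← mul_assoc, ← mul_assoc, ← ENNReal.ofReal_mul (by positivity),
          ← ENNReal.ofReal_mul (by positivity)]
        congr 2
        have haK : (a k) ≠ 0 := (ha k).ne'
        have hMne : (M:ℝ) ≠ 0 := Nat.cast_ne_zero.2 hM.ne'
        field_simp
end
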